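/- arXiv:1109.1075 — 6 statements merged into one kernel-verified Lean document; each statement's English description precedes it below -/
import Mathlib

section
/- Assume the Heston coefficients additionally satisfy b₁ = 0. Then for every γ > 0 there exists a constant C₅ > 0, depending only on σ, ρ, κ, θ, r, q and γ, such that for every open set O ⊆ ℍ and all u, v ∈ C^∞(ℝ²) with compact support: |a(u,v)| ≤ C₅ ‖u‖_{H¹(O,𝔴)} ‖v‖_{H¹(O,𝔴)}. -/
open MeasureTheory Real Filter

noncomputable section

/-- The open upper half-plane ℍ ⊂ ℝ². -/
def UHP : Set (ℝ × ℝ) := {p : ℝ × ℝ | 0 < p.2}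

/-- Partial derivative in the first (x) variable. -/
def pdX (u : ℝ × ℝ → ℝ) (p : ℝ × ℝ) : ℝ := fderiv ℝ u p (1, 0)

/-- Partial derivative in the second (y) variable. -/
def pdY (u : ℝ × ℝ → ℝ) (p : ℝ × ℝ) : ℝ := fderiv ℝ u p (0, 1)

/-- The weight 𝔴(x,y) = y^(β−1) exp(−γ|x| − μ y). -/
def hw (β γ μ : ℝ) (p : ℝ × ℝ) : ℝ :=
  p.2 ^ (β - 1) * Real.exp (-γ * |p.1| - μ * p.2)

/-- The Heston operator A. -/
def hestonOp (σ ρ κ θ r q : ℝ) (u : ℝ × ℝ → ℝ) (p : ℝ × ℝ) : ℝ :=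
  -(p.2 / 2) * (pdX (pdX u) p + 2 * ρ * σ * pdY (pdX u) p + σ ^ 2 * pdY (pdY u) p)
    - (r - q - p.2 / 2) * pdX u p - κ * (θ - p.2) * pdY u p + r * u p

/-- The Heston bilinear form a(u,v) over a set O ⊆ ℍ (with β = 2κθ/σ², μ = 2κ/σ²,
a₁ = κρ/σ − 1/2, b₁ = r − q − κθρ/σ). -/
def hestonForm (σ ρ κ θ r q γ : ℝ) (O : Set (ℝ × ℝ)) (u v : ℝ × ℝ → ℝ) : ℝ :=
  1 / 2 * (∫ p in O,
      (pdX u p * pdX v p + ρ * σ * pdY u p * pdX v p + ρ * σ * pdX u p * pdY v p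
          + σ ^ 2 * pdY u p * pdY v p) * p.2 * hw (2 * κ * θ / σ ^ 2) γ (2 * κ / σ ^ 2) p)
    - γ / 2 * (∫ p in O,
      (pdX u p + ρ * σ * pdY u p) * v p * Real.sign p.1 * p.2
          * hw (2 * κ * θ / σ ^ 2) γ (2 * κ / σ ^ 2) p)
    - (∫ p in O,
      ((κ * ρ / σ - 1 / 2) * p.2 + (r - q - κ * θ * ρ / σ)) * pdX u p * v p
          * hw (2 * κ * θ / σ ^ 2) γ (2 * κ / σ ^ 2) p)
    + r * (∫ p in O, u p * v p * hw (2 * κ * θ / σ ^ 2) γ (2 * κ / σ ^ 2) p)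

/-- The squared weighted Sobolev H¹(O,𝔴) norm:
‖u‖² = ∫_O ( y(u_x² + u_y²) + (1+y)u² ) 𝔴. -/
def h1Sq (β γ μ : ℝ) (O : Set (ℝ × ℝ)) (u : ℝ × ℝ → ℝ) : ℝ :=
  ∫ p in O, (p.2 * ((pdX u p) ^ 2 + (pdY u p) ^ 2) + (1 + p.2) * (u p) ^ 2) * hw β γ μ p

/-! ### Auxiliary lemmas -/

/-- The integrand of the `h1Sq` norm. -/
def FF (β γ μ : ℝ) (u : ℝ × ℝ → ℝ) (p : ℝ × ℝ) : ℝ :=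
  (p.2 * ((pdX u p) ^ 2 + (pdY u p) ^ 2) + (1 + p.2) * (u p) ^ 2) * hw β γ μ p

lemma myKey (a b s A B : ℝ) (hs : 0 ≤ s) (hA : a ^ 2 * s ≤ A) (hB : b ^ 2 * s ≤ B) :
    |a * b * s| ≤ Real.sqrt A * Real.sqrt B := by
  have h1 : |a * b * s| = Real.sqrt (a ^ 2 * s) * Real.sqrt (b ^ 2 * s) := by
    rw [← Real.sqrt_mul (by positivity),
      show a ^ 2 * s * (b ^ 2 * s) = (a * b * s) ^ 2 by ring, Real.sqrt_sq_eq_abs]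
  rw [h1]
  exact mul_le_mul (Real.sqrt_le_sqrt hA) (Real.sqrt_le_sqrt hB) (Real.sqrt_nonneg _)
    (Real.sqrt_nonneg _)

lemma myCS {X : Type*} [MeasurableSpace X] (μ : Measure X) (f g : X → ℝ)
    (hf : Integrable f μ) (hg : Integrable g μ) (hf0 : 0 ≤ᵐ[μ] f) (hg0 : 0 ≤ᵐ[μ] g) :
    (∫ x, Real.sqrt (f x) * Real.sqrt (g x) ∂μ)
      ≤ Real.sqrt (∫ x, f x ∂μ) * Real.sqrt (∫ x, g x ∂μ) := by
  set A := ∫ x, f x ∂μ with hA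
  set B := ∫ x, g x ∂μ with hB
  have hA0 : 0 ≤ A := integral_nonneg_of_ae hf0
  have hB0 : 0 ≤ B := integral_nonneg_of_ae hg0
  rcases eq_or_lt_of_le hA0 with hA0' | hA0'
  · have hf' : f =ᵐ[μ] 0 := (integral_eq_zero_iff_of_nonneg_ae hf0 hf).mp hA0'.symm
    have hz : (fun x => Real.sqrt (f x) * Real.sqrt (g x)) =ᵐ[μ] 0 := by
      filter_upwards [hf'] with x hx
      simp only [Pi.zero_apply] at hx ⊢
      simp [hx]
    rw [integral_congr_ae hz]
    simp only [Pi.zero_apply, integral_zero]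
    positivity
  rcases eq_or_lt_of_le hB0 with hB0' | hB0'
  · have hg' : g =ᵐ[μ] 0 := (integral_eq_zero_iff_of_nonneg_ae hg0 hg).mp hB0'.symm
    have hz : (fun x => Real.sqrt (f x) * Real.sqrt (g x)) =ᵐ[μ] 0 := by
      filter_upwards [hg'] with x hx
      simp only [Pi.zero_apply] at hx ⊢
      simp [hx]
    rw [integral_congr_ae hz]
    simp only [Pi.zero_apply, integral_zero]
    positivity
  have key : ∀ᵐ x ∂μ, 2 * (Real.sqrt A * Real.sqrt B) * (Real.sqrt (f x) * Real.sqrt (g x))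
      ≤ B * f x + A * g x := by
    filter_upwards [hf0, hg0] with x hfx hgx
    simp only [Pi.zero_apply] at hfx hgx
    have h1 : Real.sqrt B * Real.sqrt (f x) = Real.sqrt (B * f x) := (Real.sqrt_mul hB0 _).symm
    have h2 : Real.sqrt A * Real.sqrt (g x) = Real.sqrt (A * g x) := (Real.sqrt_mul hA0 _).symm
    have h3 : Real.sqrt (B * f x) ^ 2 = B * f x := Real.sq_sqrt (mul_nonneg hB0 hfx)
    have h4 : Real.sqrt (A * g x) ^ 2 = A * g x := Real.sq_sqrt (mul_nonneg hA0 hgx)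
    have he : 2 * (Real.sqrt A * Real.sqrt B) * (Real.sqrt (f x) * Real.sqrt (g x))
        = 2 * (Real.sqrt (B * f x) * Real.sqrt (A * g x)) := by
      rw [← h1, ← h2]; ring
    rw [he]
    nlinarith [sq_nonneg (Real.sqrt (B * f x) - Real.sqrt (A * g x))]
  have hint : ∫ x, 2 * (Real.sqrt A * Real.sqrt B) * (Real.sqrt (f x) * Real.sqrt (g x)) ∂μ
      ≤ ∫ x, B * f x + A * g x ∂μ := by
    refine integral_mono_of_nonneg ?_ ((hf.const_mul B).add (hg.const_mul A)) key
    exact Eventually.of_forall fun x => by positivity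
  rw [integral_const_mul, integral_add (hf.const_mul B) (hg.const_mul A),
    integral_const_mul, integral_const_mul] at hint
  have hsA : 0 < Real.sqrt A := Real.sqrt_pos.mpr hA0'
  have hsB : 0 < Real.sqrt B := Real.sqrt_pos.mpr hB0'
  have h3 : Real.sqrt A ^ 2 = A := Real.sq_sqrt hA0
  have h4 : Real.sqrt B ^ 2 = B := Real.sq_sqrt hB0
  nlinarith [mul_pos hsA hsB]

lemma sign_abs_le (x : ℝ) : |Real.sign x| ≤ 1 := by
  rcases lt_trichotomy x 0 with h | h | h
  · rw [Real.sign_of_neg h]; norm_num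
  · rw [h, Real.sign_zero]; norm_num
  · rw [Real.sign_of_pos h]; norm_num

lemma hw_nonneg (β γ μ : ℝ) (p : ℝ × ℝ) (h : 0 ≤ p.2) : 0 ≤ hw β γ μ p :=
  mul_nonneg (Real.rpow_nonneg h _) (Real.exp_nonneg _)

lemma hw_meas (β γ μ : ℝ) : Measurable (hw β γ μ) := by
  unfold hw
  measurability

lemma pdX_cont {u : ℝ × ℝ → ℝ} (hu : ContDiff ℝ (⊤ : ℕ∞) u) : Continuous (pdX u) :=
  (hu.continuous_fderiv (by simp)).clm_apply continuous_const

lemma pdY_cont {u : ℝ × ℝ → ℝ} (hu : ContDiff ℝ (⊤ : ℕ∞) u) : Continuous (pdY u) :=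
  (hu.continuous_fderiv (by simp)).clm_apply continuous_const

lemma pdX_zero {u : ℝ × ℝ → ℝ} {p : ℝ × ℝ} (hp : p ∉ tsupport u) : pdX u p = 0 := by
  have h : fderiv ℝ u p = 0 := by
    by_contra h
    exact hp (support_fderiv_subset (𝕜 := ℝ) (Function.mem_support.mpr h))
  simp [pdX, h]

lemma pdY_zero {u : ℝ × ℝ → ℝ} {p : ℝ × ℝ} (hp : p ∉ tsupport u) : pdY u p = 0 := by
  have h : fderiv ℝ u p = 0 := by
    by_contra h
    exact hp (support_fderiv_subset (𝕜 := ℝ) (Function.mem_support.mpr h))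
  simp [pdY, h]

lemma FF_bounds (β γ μ : ℝ) (u : ℝ × ℝ → ℝ) (p : ℝ × ℝ) (hy : 0 < p.2) :
    (pdX u p) ^ 2 * (p.2 * hw β γ μ p) ≤ FF β γ μ u p ∧
    (pdY u p) ^ 2 * (p.2 * hw β γ μ p) ≤ FF β γ μ u p ∧
    (u p) ^ 2 * (p.2 * hw β γ μ p) ≤ FF β γ μ u p ∧
    (u p) ^ 2 * hw β γ μ p ≤ FF β γ μ u p := by
  have h0 : 0 ≤ hw β γ μ p := hw_nonneg β γ μ p hy.le
  unfold FF
  refine ⟨?_, ?_, ?_, ?_⟩ <;>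
    nlinarith [mul_nonneg (mul_nonneg hy.le (sq_nonneg (pdX u p))) h0,
      mul_nonneg (mul_nonneg hy.le (sq_nonneg (pdY u p))) h0,
      mul_nonneg (mul_nonneg hy.le (sq_nonneg (u p))) h0,
      mul_nonneg (sq_nonneg (u p)) h0, mul_nonneg (sq_nonneg (pdX u p)) h0,
      mul_nonneg (sq_nonneg (pdY u p)) h0]

lemma FF_meas (β γ μ : ℝ) {u : ℝ × ℝ → ℝ} (hu : ContDiff ℝ (⊤ : ℕ∞) u) :
    Measurable (FF β γ μ u) := by
  have h1 : Continuous (pdX u) := pdX_cont hu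
  have h2 : Continuous (pdY u) := pdY_cont hu
  have hG : Continuous (fun p : ℝ × ℝ =>
      p.2 * ((pdX u p) ^ 2 + (pdY u p) ^ 2) + (1 + p.2) * (u p) ^ 2) :=
    (continuous_snd.mul ((h1.pow 2).add (h2.pow 2))).add
      ((continuous_const.add continuous_snd).mul (hu.continuous.pow 2))
  exact hG.measurable.mul (hw_meas β γ μ)

lemma FF_nonneg (β γ μ : ℝ) (u : ℝ × ℝ → ℝ) (p : ℝ × ℝ) (hy : 0 < p.2) :
    0 ≤ FF β γ μ u p := by
  have h0 : 0 ≤ hw β γ μ p := hw_nonneg β γ μ p hy.le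
  unfold FF
  nlinarith [mul_nonneg (mul_nonneg hy.le (sq_nonneg (pdX u p))) h0,
    mul_nonneg (mul_nonneg hy.le (sq_nonneg (pdY u p))) h0,
    mul_nonneg (mul_nonneg hy.le (sq_nonneg (u p))) h0,
    mul_nonneg (sq_nonneg (u p)) h0]

lemma FF_int (β γ μ : ℝ) (hβ : 0 < β) (hγ : 0 < γ) (hμ : 0 < μ)
    {O : Set (ℝ × ℝ)} (hOm : MeasurableSet O) (hsub : O ⊆ UHP)
    {u : ℝ × ℝ → ℝ} (hu : ContDiff ℝ (⊤ : ℕ∞) u) (hcu : HasCompactSupport u) :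
    IntegrableOn (FF β γ μ u) O := by
  set G : ℝ × ℝ → ℝ := fun p =>
    p.2 * ((pdX u p) ^ 2 + (pdY u p) ^ 2) + (1 + p.2) * (u p) ^ 2 with hGdef
  have hGc : Continuous G :=
    (continuous_snd.mul (((pdX_cont hu).pow 2).add ((pdY_cont hu).pow 2))).add
      ((continuous_const.add continuous_snd).mul (hu.continuous.pow 2))
  have hGsupp : ∀ p, p ∉ tsupport u → G p = 0 := fun p hp => by
    simp [hGdef, pdX_zero hp, pdY_zero hp, image_eq_zero_of_notMem_tsupport hp]
  have hGcs : HasCompactSupport G := HasCompactSupport.intro hcu hGsupp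
  obtain ⟨Cb, hCb⟩ := hGcs.exists_bound_of_continuous hGc
  have hCb0 : 0 ≤ Cb := le_trans (norm_nonneg _) (hCb 0)
  obtain ⟨R, hR⟩ := hcu.isBounded.subset_closedBall 0
  set R₁ : ℝ := |R| + 1 with hR₁
  have hR₁0 : 0 < R₁ := by positivity
  set box : Set (ℝ × ℝ) := Set.Icc (-R₁) R₁ ×ˢ Set.Ioc 0 R₁ with hboxdef
  have hboxm : MeasurableSet box := measurableSet_Icc.prod measurableSet_Ioc
  have hrpow : IntegrableOn (fun y : ℝ => y ^ (β - 1)) (Set.Ioc 0 R₁) :=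
    (intervalIntegral.intervalIntegrable_rpow' (by linarith)).1
  have hone : IntegrableOn (fun _ : ℝ => (1 : ℝ)) (Set.Icc (-R₁) R₁) :=
    integrableOn_const measure_Icc_lt_top.ne
  have hprod : IntegrableOn (fun p : ℝ × ℝ => Cb * p.2 ^ (β - 1)) box := by
    have h := hone.mul_prod hrpow
    rw [Measure.prod_restrict, ← Measure.volume_eq_prod] at h
    simpa [hboxdef, IntegrableOn] using h.const_mul Cb
  have hdom : Integrable (box.indicator (fun p : ℝ × ℝ => Cb * p.2 ^ (β - 1))) :=
    hprod.integrable_indicator hboxm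
  refine Integrable.mono' (hdom.integrableOn) ((FF_meas β γ μ hu).aestronglyMeasurable) ?_
  rw [ae_restrict_iff' hOm]
  refine Eventually.of_forall fun p hp => ?_
  have hy : 0 < p.2 := hsub hp
  by_cases hpK : p ∈ tsupport u
  · have hnorm : ‖p‖ ≤ R := by
      have := hR hpK
      simpa [Metric.mem_closedBall, dist_zero_right] using this
    have hx1 : |p.1| ≤ R₁ := by
      calc |p.1| = ‖p.1‖ := rfl
        _ ≤ ‖p‖ := norm_fst_le p
        _ ≤ R := hnorm
        _ ≤ R₁ := by rw [hR₁]; have := le_abs_self R; linarith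
    have hx2 : p.2 ≤ R₁ := by
      calc p.2 ≤ |p.2| := le_abs_self _
        _ = ‖p.2‖ := rfl
        _ ≤ ‖p‖ := norm_snd_le p
        _ ≤ R := hnorm
        _ ≤ R₁ := by rw [hR₁]; have := le_abs_self R; linarith
    have hpbox : p ∈ box := by
      refine ⟨?_, hy, hx2⟩
      rw [Set.mem_Icc]
      constructor <;> [linarith [neg_abs_le p.1, abs_le.mp hx1]; exact (abs_le.mp hx1).2]
    rw [Set.indicator_of_mem hpbox]
    have hw0 : 0 ≤ hw β γ μ p := hw_nonneg β γ μ p hy.le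
    have hexp : Real.exp (-γ * |p.1| - μ * p.2) ≤ 1 := by
      rw [Real.exp_le_one_iff]
      nlinarith [abs_nonneg p.1]
    have hrp0 : (0 : ℝ) ≤ p.2 ^ (β - 1) := Real.rpow_nonneg hy.le _
    calc ‖FF β γ μ u p‖ = ‖G p‖ * hw β γ μ p := by
          rw [show FF β γ μ u p = G p * hw β γ μ p from rfl, norm_mul,
            Real.norm_eq_abs (hw β γ μ p), abs_of_nonneg hw0]
      _ ≤ Cb * hw β γ μ p := mul_le_mul_of_nonneg_right (hCb p) hw0
      _ = Cb * (p.2 ^ (β - 1) * Real.exp (-γ * |p.1| - μ * p.2)) := rfl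
      _ ≤ Cb * (p.2 ^ (β - 1) * 1) := by
          apply mul_le_mul_of_nonneg_left _ hCb0
          exact mul_le_mul_of_nonneg_left hexp hrp0
      _ = Cb * p.2 ^ (β - 1) := by ring
  · have hFF0 : FF β γ μ u p = 0 := by
      rw [show FF β γ μ u p = G p * hw β γ μ p from rfl, hGsupp p hpK, zero_mul]
    rw [hFF0, norm_zero]
    apply Set.indicator_nonneg
    intro q hq
    have hq2 : 0 < q.2 := hq.2.1
    exact mul_nonneg hCb0 (Real.rpow_nonneg hq2.le _)

set_option maxHeartbeats 1000000 in
/-- continuity estimate for the Heston bilinear form when b₁ = 0. -/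
theorem stmt2 (σ ρ κ θ r q : ℝ) (hσ : σ ≠ 0) (hρ₁ : -1 < ρ) (hρ₂ : ρ < 1)
    (hκ : 0 < κ) (hθ : 0 < θ) (hr : 0 ≤ r) (hq : 0 ≤ q)
    (hb₁ : r - q - κ * θ * ρ / σ = 0) :
    ∀ γ : ℝ, 0 < γ → ∃ C₅ : ℝ, 0 < C₅ ∧
      ∀ O : Set (ℝ × ℝ), IsOpen O → O ⊆ UHP →
        ∀ u v : ℝ × ℝ → ℝ, ContDiff ℝ (⊤ : ℕ∞) u → HasCompactSupport u →
          ContDiff ℝ (⊤ : ℕ∞) v → HasCompactSupport v →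
          |hestonForm σ ρ κ θ r q γ O u v|
            ≤ C₅ * Real.sqrt (h1Sq (2 * κ * θ / σ ^ 2) γ (2 * κ / σ ^ 2) O u)
                * Real.sqrt (h1Sq (2 * κ * θ / σ ^ 2) γ (2 * κ / σ ^ 2) O v) := by
  intro γ hγ
  refine ⟨1 / 2 * (1 + 2 * |ρ * σ| + σ ^ 2) + γ / 2 * (1 + |ρ * σ|) + |κ * ρ / σ - 1 / 2| + r + 1,
    by positivity, ?_⟩
  intro O hO hOsub u v hu hcu hv hcv
  have hOm : MeasurableSet O := hO.measurableSet
  set β : ℝ := 2 * κ * θ / σ ^ 2 with hβdef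
  set μp : ℝ := 2 * κ / σ ^ 2 with hμdef
  have hβ : 0 < β := by rw [hβdef]; positivity
  have hμ : 0 < μp := by rw [hμdef]; positivity
  -- integrability of the norm densities
  have hFu : IntegrableOn (FF β γ μp u) O := FF_int β γ μp hβ hγ hμ hOm hOsub hu hcu
  have hFv : IntegrableOn (FF β γ μp v) O := FF_int β γ μp hβ hγ hμ hOm hOsub hv hcv
  set S : ℝ × ℝ → ℝ := fun p => Real.sqrt (FF β γ μp u p) * Real.sqrt (FF β γ μp v p) with hSdef
  have hSmeas : AEStronglyMeasurable S (volume.restrict O) :=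
    (((FF_meas β γ μp hu).sqrt.mul (FF_meas β γ μp hv).sqrt)).aestronglyMeasurable
  have hFu0 : ∀ p ∈ O, 0 ≤ FF β γ μp u p := fun p hp => FF_nonneg β γ μp u p (hOsub hp)
  have hFv0 : ∀ p ∈ O, 0 ≤ FF β γ μp v p := fun p hp => FF_nonneg β γ μp v p (hOsub hp)
  have hSint : IntegrableOn S O := by
    refine Integrable.mono' (((hFu.add hFv).div_const 2)) hSmeas ?_
    rw [ae_restrict_iff' hOm]
    refine Eventually.of_forall fun p hp => ?_
    have h1 := hFu0 p hp
    have h2 := hFv0 p hp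
    have hs1 : Real.sqrt (FF β γ μp u p) ^ 2 = FF β γ μp u p := Real.sq_sqrt h1
    have hs2 : Real.sqrt (FF β γ μp v p) ^ 2 = FF β γ μp v p := Real.sq_sqrt h2
    have hS0 : 0 ≤ S p := mul_nonneg (Real.sqrt_nonneg _) (Real.sqrt_nonneg _)
    rw [Real.norm_eq_abs, abs_of_nonneg hS0]
    show Real.sqrt (FF β γ μp u p) * Real.sqrt (FF β γ μp v p)
      ≤ (FF β γ μp u + FF β γ μp v) p / 2
    rw [Pi.add_apply]
    nlinarith [sq_nonneg (Real.sqrt (FF β γ μp u p) - Real.sqrt (FF β γ μp v p))]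
  set T : ℝ := ∫ p in O, S p with hTdef
  have hT0 : 0 ≤ T := by
    rw [hTdef]
    exact integral_nonneg fun p => mul_nonneg (Real.sqrt_nonneg _) (Real.sqrt_nonneg _)
  have hTle : T ≤ Real.sqrt (h1Sq β γ μp O u) * Real.sqrt (h1Sq β γ μp O v) := by
    rw [hTdef]
    exact myCS (volume.restrict O) _ _ hFu hFv
      ((ae_restrict_iff' hOm).2 (Eventually.of_forall hFu0))
      ((ae_restrict_iff' hOm).2 (Eventually.of_forall hFv0))
  have hP0 : 0 ≤ Real.sqrt (h1Sq β γ μp O u) * Real.sqrt (h1Sq β γ μp O v) :=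
    mul_nonneg (Real.sqrt_nonneg _) (Real.sqrt_nonneg _)
  -- rewrite the form using b₁ = 0
  have hform : hestonForm σ ρ κ θ r q γ O u v =
      1 / 2 * (∫ p in O,
        (pdX u p * pdX v p + ρ * σ * pdY u p * pdX v p + ρ * σ * pdX u p * pdY v p
            + σ ^ 2 * pdY u p * pdY v p) * p.2 * hw β γ μp p)
      - γ / 2 * (∫ p in O,
        (pdX u p + ρ * σ * pdY u p) * v p * Real.sign p.1 * p.2 * hw β γ μp p)
      - (∫ p in O, ((κ * ρ / σ - 1 / 2) * p.2) * pdX u p * v p * hw β γ μp p)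
      + r * (∫ p in O, u p * v p * hw β γ μp p) := by
    simp only [hestonForm, hb₁, add_zero, hβdef, hμdef]
  -- pointwise bounds
  have hpt : ∀ p ∈ O,
      ‖(pdX u p * pdX v p + ρ * σ * pdY u p * pdX v p + ρ * σ * pdX u p * pdY v p
          + σ ^ 2 * pdY u p * pdY v p) * p.2 * hw β γ μp p‖ ≤ (1 + 2 * |ρ * σ| + σ ^ 2) * S p ∧
      ‖(pdX u p + ρ * σ * pdY u p) * v p * Real.sign p.1 * p.2 * hw β γ μp p‖
          ≤ (1 + |ρ * σ|) * S p ∧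
      ‖((κ * ρ / σ - 1 / 2) * p.2) * pdX u p * v p * hw β γ μp p‖
          ≤ |κ * ρ / σ - 1 / 2| * S p ∧
      ‖u p * v p * hw β γ μp p‖ ≤ 1 * S p := by
    intro p hp
    have hy : 0 < p.2 := hOsub hp
    have hw0 : 0 ≤ hw β γ μp p := hw_nonneg β γ μp p hy.le
    have hs : 0 ≤ p.2 * hw β γ μp p := mul_nonneg hy.le hw0
    obtain ⟨h1u, h2u, h3u, h4u⟩ := FF_bounds β γ μp u p hy
    obtain ⟨h1v, h2v, h3v, h4v⟩ := FF_bounds β γ μp v p hy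
    have hS0 : 0 ≤ S p := mul_nonneg (Real.sqrt_nonneg _) (Real.sqrt_nonneg _)
    have A1 : |pdX u p * pdX v p * (p.2 * hw β γ μp p)| ≤ S p := myKey _ _ _ _ _ hs h1u h1v
    have A2 : |pdY u p * pdX v p * (p.2 * hw β γ μp p)| ≤ S p := myKey _ _ _ _ _ hs h2u h1v
    have A3 : |pdX u p * pdY v p * (p.2 * hw β γ μp p)| ≤ S p := myKey _ _ _ _ _ hs h1u h2v
    have A4 : |pdY u p * pdY v p * (p.2 * hw β γ μp p)| ≤ S p := myKey _ _ _ _ _ hs h2u h2v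
    have B1 : |pdX u p * v p * (p.2 * hw β γ μp p)| ≤ S p := myKey _ _ _ _ _ hs h1u h3v
    have B2 : |pdY u p * v p * (p.2 * hw β γ μp p)| ≤ S p := myKey _ _ _ _ _ hs h2u h3v
    have C1 : |u p * v p * hw β γ μp p| ≤ S p := myKey _ _ _ _ _ hw0 h4u h4v
    refine ⟨?_, ?_, ?_, ?_⟩
    · rw [Real.norm_eq_abs, show
        (pdX u p * pdX v p + ρ * σ * pdY u p * pdX v p + ρ * σ * pdX u p * pdY v p
          + σ ^ 2 * pdY u p * pdY v p) * p.2 * hw β γ μp p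
        = pdX u p * pdX v p * (p.2 * hw β γ μp p)
          + ρ * σ * (pdY u p * pdX v p * (p.2 * hw β γ μp p))
          + ρ * σ * (pdX u p * pdY v p * (p.2 * hw β γ μp p))
          + σ ^ 2 * (pdY u p * pdY v p * (p.2 * hw β γ μp p)) from by ring]
      have i1 := abs_add_le
        (pdX u p * pdX v p * (p.2 * hw β γ μp p)
          + ρ * σ * (pdY u p * pdX v p * (p.2 * hw β γ μp p))
          + ρ * σ * (pdX u p * pdY v p * (p.2 * hw β γ μp p)))
        (σ ^ 2 * (pdY u p * pdY v p * (p.2 * hw β γ μp p)))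
      have i2 := abs_add_le
        (pdX u p * pdX v p * (p.2 * hw β γ μp p)
          + ρ * σ * (pdY u p * pdX v p * (p.2 * hw β γ μp p)))
        (ρ * σ * (pdX u p * pdY v p * (p.2 * hw β γ μp p)))
      have i3 := abs_add_le (pdX u p * pdX v p * (p.2 * hw β γ μp p))
        (ρ * σ * (pdY u p * pdX v p * (p.2 * hw β γ μp p)))
      have m2 : |ρ * σ * (pdY u p * pdX v p * (p.2 * hw β γ μp p))| ≤ |ρ * σ| * S p := by
        rw [abs_mul]; exact mul_le_mul_of_nonneg_left A2 (abs_nonneg _)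
      have m3 : |ρ * σ * (pdX u p * pdY v p * (p.2 * hw β γ μp p))| ≤ |ρ * σ| * S p := by
        rw [abs_mul]; exact mul_le_mul_of_nonneg_left A3 (abs_nonneg _)
      have m4 : |σ ^ 2 * (pdY u p * pdY v p * (p.2 * hw β γ μp p))| ≤ σ ^ 2 * S p := by
        rw [abs_mul, abs_of_nonneg (sq_nonneg σ)]
        exact mul_le_mul_of_nonneg_left A4 (sq_nonneg _)
      calc _ ≤ S p + |ρ * σ| * S p + |ρ * σ| * S p + σ ^ 2 * S p := by linarith
        _ = (1 + 2 * |ρ * σ| + σ ^ 2) * S p := by ring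
    · rw [Real.norm_eq_abs, show
        (pdX u p + ρ * σ * pdY u p) * v p * Real.sign p.1 * p.2 * hw β γ μp p
        = (pdX u p * v p * (p.2 * hw β γ μp p)
            + ρ * σ * (pdY u p * v p * (p.2 * hw β γ μp p))) * Real.sign p.1 from by ring,
        abs_mul]
      have i3 := abs_add_le (pdX u p * v p * (p.2 * hw β γ μp p))
        (ρ * σ * (pdY u p * v p * (p.2 * hw β γ μp p)))
      have m2 : |ρ * σ * (pdY u p * v p * (p.2 * hw β γ μp p))| ≤ |ρ * σ| * S p := by
        rw [abs_mul]; exact mul_le_mul_of_nonneg_left B2 (abs_nonneg _)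
      calc |pdX u p * v p * (p.2 * hw β γ μp p)
              + ρ * σ * (pdY u p * v p * (p.2 * hw β γ μp p))| * |Real.sign p.1|
          ≤ |pdX u p * v p * (p.2 * hw β γ μp p)
              + ρ * σ * (pdY u p * v p * (p.2 * hw β γ μp p))| * 1 :=
            mul_le_mul_of_nonneg_left (sign_abs_le p.1) (abs_nonneg _)
        _ ≤ (S p + |ρ * σ| * S p) * 1 := by
            apply mul_le_mul_of_nonneg_right _ zero_le_one
            linarith
        _ = (1 + |ρ * σ|) * S p := by ring
    · rw [Real.norm_eq_abs, show
        ((κ * ρ / σ - 1 / 2) * p.2) * pdX u p * v p * hw β γ μp p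
        = (κ * ρ / σ - 1 / 2) * (pdX u p * v p * (p.2 * hw β γ μp p)) from by ring, abs_mul]
      exact mul_le_mul_of_nonneg_left B1 (abs_nonneg _)
    · rw [Real.norm_eq_abs, one_mul]
      exact C1
  -- integral bounds for the four pieces
  have key : ∀ (f : ℝ × ℝ → ℝ) (c : ℝ), 0 ≤ c → (∀ p ∈ O, ‖f p‖ ≤ c * S p) →
      |∫ p in O, f p| ≤ c * T := by
    intro f c hc hb
    calc |∫ p in O, f p| = ‖∫ p in O, f p‖ := (Real.norm_eq_abs _).symm
      _ ≤ ∫ p in O, ‖f p‖ := norm_integral_le_integral_norm _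
      _ ≤ ∫ p in O, c * S p := by
          exact integral_mono_of_nonneg (Eventually.of_forall fun p => norm_nonneg _)
            (hSint.const_mul c) ((ae_restrict_iff' hOm).mpr (Eventually.of_forall hb))
      _ = c * T := by rw [hTdef, integral_const_mul]
  have k1 := key _ (1 + 2 * |ρ * σ| + σ ^ 2) (by positivity) fun p hp => (hpt p hp).1
  have k2 := key _ (1 + |ρ * σ|) (by positivity) fun p hp => (hpt p hp).2.1
  have k3 := key _ |κ * ρ / σ - 1 / 2| (abs_nonneg _) fun p hp => (hpt p hp).2.2.1
  have k4 := key _ 1 zero_le_one fun p hp => (hpt p hp).2.2.2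
  rw [hform]
  have habs : |1 / 2 * (∫ p in O,
        (pdX u p * pdX v p + ρ * σ * pdY u p * pdX v p + ρ * σ * pdX u p * pdY v p
            + σ ^ 2 * pdY u p * pdY v p) * p.2 * hw β γ μp p)
      - γ / 2 * (∫ p in O,
        (pdX u p + ρ * σ * pdY u p) * v p * Real.sign p.1 * p.2 * hw β γ μp p)
      - (∫ p in O, ((κ * ρ / σ - 1 / 2) * p.2) * pdX u p * v p * hw β γ μp p)
      + r * (∫ p in O, u p * v p * hw β γ μp p)|
      ≤ 1 / 2 * |∫ p in O,
        (pdX u p * pdX v p + ρ * σ * pdY u p * pdX v p + ρ * σ * pdX u p * pdY v p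
            + σ ^ 2 * pdY u p * pdY v p) * p.2 * hw β γ μp p|
      + γ / 2 * |∫ p in O,
        (pdX u p + ρ * σ * pdY u p) * v p * Real.sign p.1 * p.2 * hw β γ μp p|
      + |∫ p in O, ((κ * ρ / σ - 1 / 2) * p.2) * pdX u p * v p * hw β γ μp p|
      + r * |∫ p in O, u p * v p * hw β γ μp p| := by
    have t1 := abs_add_le
      (1 / 2 * (∫ p in O,
        (pdX u p * pdX v p + ρ * σ * pdY u p * pdX v p + ρ * σ * pdX u p * pdY v p
            + σ ^ 2 * pdY u p * pdY v p) * p.2 * hw β γ μp p)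
      - γ / 2 * (∫ p in O,
        (pdX u p + ρ * σ * pdY u p) * v p * Real.sign p.1 * p.2 * hw β γ μp p)
      - (∫ p in O, ((κ * ρ / σ - 1 / 2) * p.2) * pdX u p * v p * hw β γ μp p))
      (r * (∫ p in O, u p * v p * hw β γ μp p))
    have t2 := abs_sub
      (1 / 2 * (∫ p in O,
        (pdX u p * pdX v p + ρ * σ * pdY u p * pdX v p + ρ * σ * pdX u p * pdY v p
            + σ ^ 2 * pdY u p * pdY v p) * p.2 * hw β γ μp p)
      - γ / 2 * (∫ p in O,
        (pdX u p + ρ * σ * pdY u p) * v p * Real.sign p.1 * p.2 * hw β γ μp p))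
      (∫ p in O, ((κ * ρ / σ - 1 / 2) * p.2) * pdX u p * v p * hw β γ μp p)
    have t3 := abs_sub
      (1 / 2 * (∫ p in O,
        (pdX u p * pdX v p + ρ * σ * pdY u p * pdX v p + ρ * σ * pdX u p * pdY v p
            + σ ^ 2 * pdY u p * pdY v p) * p.2 * hw β γ μp p))
      (γ / 2 * (∫ p in O,
        (pdX u p + ρ * σ * pdY u p) * v p * Real.sign p.1 * p.2 * hw β γ μp p))
    rw [abs_mul r, abs_of_nonneg hr] at t1
    rw [abs_mul, abs_mul, abs_of_nonneg (by norm_num : (0:ℝ) ≤ 1/2),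
      abs_of_nonneg (by positivity : (0:ℝ) ≤ γ/2)] at t3
    linarith
  refine le_trans habs ?_
  have c1 : 1 / 2 * |∫ p in O,
      (pdX u p * pdX v p + ρ * σ * pdY u p * pdX v p + ρ * σ * pdX u p * pdY v p
          + σ ^ 2 * pdY u p * pdY v p) * p.2 * hw β γ μp p|
      ≤ 1 / 2 * ((1 + 2 * |ρ * σ| + σ ^ 2) * T) :=
    mul_le_mul_of_nonneg_left k1 (by norm_num)
  have c2 : γ / 2 * |∫ p in O,
      (pdX u p + ρ * σ * pdY u p) * v p * Real.sign p.1 * p.2 * hw β γ μp p|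
      ≤ γ / 2 * ((1 + |ρ * σ|) * T) := mul_le_mul_of_nonneg_left k2 (by positivity)
  have c4 : r * |∫ p in O, u p * v p * hw β γ μp p| ≤ r * (1 * T) :=
    mul_le_mul_of_nonneg_left k4 hr
  have hsum : 1 / 2 * ((1 + 2 * |ρ * σ| + σ ^ 2) * T) + γ / 2 * ((1 + |ρ * σ|) * T)
      + |κ * ρ / σ - 1 / 2| * T + r * (1 * T)
      = (1 / 2 * (1 + 2 * |ρ * σ| + σ ^ 2) + γ / 2 * (1 + |ρ * σ|)
          + |κ * ρ / σ - 1 / 2| + r) * T := by ring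
  have hK0 : 0 ≤ 1 / 2 * (1 + 2 * |ρ * σ| + σ ^ 2) + γ / 2 * (1 + |ρ * σ|)
      + |κ * ρ / σ - 1 / 2| + r := by positivity
  have hfin : (1 / 2 * (1 + 2 * |ρ * σ| + σ ^ 2) + γ / 2 * (1 + |ρ * σ|)
      + |κ * ρ / σ - 1 / 2| + r) * T
      ≤ (1 / 2 * (1 + 2 * |ρ * σ| + σ ^ 2) + γ / 2 * (1 + |ρ * σ|)
          + |κ * ρ / σ - 1 / 2| + r + 1)
        * (Real.sqrt (h1Sq β γ μp O u) * Real.sqrt (h1Sq β γ μp O v)) := by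
    calc (1 / 2 * (1 + 2 * |ρ * σ| + σ ^ 2) + γ / 2 * (1 + |ρ * σ|)
          + |κ * ρ / σ - 1 / 2| + r) * T
        ≤ (1 / 2 * (1 + 2 * |ρ * σ| + σ ^ 2) + γ / 2 * (1 + |ρ * σ|)
            + |κ * ρ / σ - 1 / 2| + r)
          * (Real.sqrt (h1Sq β γ μp O u) * Real.sqrt (h1Sq β γ μp O v)) :=
          mul_le_mul_of_nonneg_left hTle hK0
      _ ≤ _ := by nlinarith
  calc _ ≤ 1 / 2 * ((1 + 2 * |ρ * σ| + σ ^ 2) * T) + γ / 2 * ((1 + |ρ * σ|) * T)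
        + |κ * ρ / σ - 1 / 2| * T + r * (1 * T) := by linarith
    _ ≤ (1 / 2 * (1 + 2 * |ρ * σ| + σ ^ 2) + γ / 2 * (1 + |ρ * σ|)
          + |κ * ρ / σ - 1 / 2| + r + 1)
        * (Real.sqrt (h1Sq β γ μp O u) * Real.sqrt (h1Sq β γ μp O v)) := by
        rw [hsum]; exact hfin
    _ = _ := by ring
end
end

section
/- There is a constant c > 0 such that for every N > 4 and every ε > 0 there exists ψ ∈ C^∞(ℝ) with 0 ≤ ψ ≤ 1, ψ(y) = 1 whenever |y| ≥ ε/2, ψ(y) = 0 whenever |y| ≤ ε/N, and such that for every β ≥ 1: if β > 1 then ∫_ℝ ψ'(y)² |y|^β dy ≤ c² 2^{2−β} (β−1)^{−1} (log N)^{−2} ε^{β−1}, and if β = 1 then ∫_ℝ ψ'(y)² |y| dy ≤ 2c² (log N)^{−1}. -/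
open MeasureTheory Real Filter

noncomputable section

private lemma aux_integral_bound {a b K r : ℝ} (ha : 0 < a) (hab : a < b) (_hK : 0 ≤ K)
    (f : ℝ → ℝ) (hf0 : ∀ y, 0 ≤ f y)
    (hfS : ∀ y, a ≤ |y| → |y| ≤ b → f y ≤ K * |y| ^ r)
    (hf_out : ∀ y, ¬(a ≤ |y| ∧ |y| ≤ b) → f y = 0) :
    ∫ y, f y ≤ 2 * K * ∫ y in a..b, y ^ r := by
  set S : Set ℝ := Set.Icc (-b) (-a) ∪ Set.Icc a b with hS
  have hmemS : ∀ y : ℝ, y ∈ S ↔ (a ≤ |y| ∧ |y| ≤ b) := by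
    intro y
    simp only [hS, Set.mem_union, Set.mem_Icc, abs_le, le_abs]
    constructor
    · rintro (⟨h1, h2⟩ | ⟨h1, h2⟩) <;> constructor
      · right; linarith
      · constructor <;> linarith
      · left; exact h1
      · constructor <;> linarith
    · rintro ⟨(h1 | h1), h2, h3⟩
      · right; exact ⟨h1, by linarith⟩
      · left; exact ⟨by linarith, by linarith⟩
  have hmeasS : MeasurableSet S := (measurableSet_Icc).union measurableSet_Icc
  set g : ℝ → ℝ := S.indicator (fun y => K * |y| ^ r) with hg
  have hcont1 : ContinuousOn (fun y : ℝ => K * |y| ^ r) (Set.Icc a b) := by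
    apply ContinuousOn.mul continuousOn_const
    apply ContinuousOn.rpow_const (continuous_abs.continuousOn)
    intro x hx
    left
    rcases hx with ⟨h1, _⟩
    exact abs_ne_zero.2 (by linarith)
  have hcont2 : ContinuousOn (fun y : ℝ => K * |y| ^ r) (Set.Icc (-b) (-a)) := by
    apply ContinuousOn.mul continuousOn_const
    apply ContinuousOn.rpow_const (continuous_abs.continuousOn)
    intro x hx
    left
    rcases hx with ⟨_, h2⟩
    exact abs_ne_zero.2 (by intro h; rw [h] at h2; linarith)
  have hint1 : IntegrableOn (fun y : ℝ => K * |y| ^ r) (Set.Icc a b) :=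
    hcont1.integrableOn_compact isCompact_Icc
  have hint2 : IntegrableOn (fun y : ℝ => K * |y| ^ r) (Set.Icc (-b) (-a)) :=
    hcont2.integrableOn_compact isCompact_Icc
  have hintS : IntegrableOn (fun y : ℝ => K * |y| ^ r) S := hint2.union hint1
  have hgint : Integrable g := (integrable_indicator_iff hmeasS).2 hintS
  have hfg : ∀ y, f y ≤ g y := by
    intro y
    by_cases hy : a ≤ |y| ∧ |y| ≤ b
    · rw [hg, Set.indicator_of_mem ((hmemS y).2 hy)]
      exact hfS y hy.1 hy.2
    · rw [hf_out y hy, hg, Set.indicator_of_notMem (fun h => hy ((hmemS y).1 h))]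
  have step1 : ∫ y, f y ≤ ∫ y, g y :=
    integral_mono_of_nonneg (Filter.Eventually.of_forall hf0) hgint
      (Filter.Eventually.of_forall hfg)
  have hdisj : Disjoint (Set.Icc (-b) (-a)) (Set.Icc a b) :=
    Set.disjoint_left.2 (fun y hy1 hy2 => by
      simp only [Set.mem_Icc] at hy1 hy2; linarith [hy1.2, hy2.1])
  have step2 : ∫ y, g y
      = (∫ y in Set.Icc (-b) (-a), K * |y| ^ r) + ∫ y in Set.Icc a b, K * |y| ^ r := by
    rw [hg, integral_indicator hmeasS, hS, setIntegral_union hdisj measurableSet_Icc hint2 hint1]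
  have step3 : (∫ y in Set.Icc (-b) (-a), K * |y| ^ r) = ∫ y in Set.Icc a b, K * |y| ^ r := by
    rw [integral_Icc_eq_integral_Ioc, integral_Icc_eq_integral_Ioc,
      ← intervalIntegral.integral_of_le (by linarith : -b ≤ -a),
      ← intervalIntegral.integral_of_le hab.le,
      ← intervalIntegral.integral_comp_neg (fun y => K * |y| ^ r)]
    simp
  have step4 : (∫ y in Set.Icc a b, K * |y| ^ r) = K * ∫ y in a..b, y ^ r := by
    rw [integral_Icc_eq_integral_Ioc, ← intervalIntegral.integral_of_le hab.le]
    rw [show (∫ y in a..b, K * |y| ^ r) = ∫ y in a..b, K * y ^ r from ?_]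
    · rw [intervalIntegral.integral_const_mul]
    · apply intervalIntegral.integral_congr
      intro y hy
      rw [Set.uIcc_of_le hab.le, Set.mem_Icc] at hy
      simp only []
      rw [abs_of_pos (show (0:ℝ) < y by linarith [hy.1])]
  calc ∫ y, f y ≤ ∫ y, g y := step1
    _ = 2 * K * ∫ y in a..b, y ^ r := by rw [step2, step3, step4]; ring

/-- cutoff functions with integral norm decay. -/
theorem stmt9 :
    ∃ c : ℝ, 0 < c ∧
      ∀ N : ℝ, 4 < N → ∀ ε : ℝ, 0 < ε →
        ∃ ψ : ℝ → ℝ, ContDiff ℝ (⊤ : ℕ∞) ψ ∧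
          (∀ y : ℝ, 0 ≤ ψ y ∧ ψ y ≤ 1) ∧
          (∀ y : ℝ, ε / 2 ≤ |y| → ψ y = 1) ∧
          (∀ y : ℝ, |y| ≤ ε / N → ψ y = 0) ∧
          ∀ β : ℝ, 1 ≤ β →
            (1 < β →
              (∫ y : ℝ, (deriv ψ y) ^ 2 * |y| ^ β)
                ≤ c ^ 2 * (2 : ℝ) ^ (2 - β) * (β - 1)⁻¹ * ((Real.log N) ^ 2)⁻¹
                    * ε ^ (β - 1)) ∧
            (β = 1 →
              (∫ y : ℝ, (deriv ψ y) ^ 2 * |y|)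
                ≤ 2 * c ^ 2 * (Real.log N)⁻¹) := by
  -- the universal bound on the derivative of the smooth transition function
  have hsupp : HasCompactSupport (deriv Real.smoothTransition) := by
    apply HasCompactSupport.intro (isCompact_Icc (a := (0:ℝ)) (b := 1))
    intro x hx
    simp only [Set.mem_Icc, not_and_or, not_le] at hx
    rcases hx with h | h
    · have hev : ∀ᶠ y in nhds x, Real.smoothTransition y = 0 := by
        filter_upwards [eventually_lt_nhds h] with y hy
        exact Real.smoothTransition.zero_of_nonpos hy.le
      rw [Filter.EventuallyEq.deriv_eq hev]; exact deriv_const x 0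
    · have hev : ∀ᶠ y in nhds x, Real.smoothTransition y = 1 := by
        filter_upwards [eventually_gt_nhds h] with y hy
        exact Real.smoothTransition.one_of_one_le hy.le
      rw [Filter.EventuallyEq.deriv_eq hev]; exact deriv_const x 1
  obtain ⟨C₀, hC₀⟩ := hsupp.exists_bound_of_continuous
    ((Real.smoothTransition.contDiff (n := (⊤ : ℕ∞))).continuous_deriv
      (by exact_mod_cast le_top))
  set C : ℝ := max C₀ 1 with hCdef
  have hC1 : (1:ℝ) ≤ C := le_max_right _ _
  have hCpos : 0 < C := by linarith
  have hC : ∀ x, |deriv Real.smoothTransition x| ≤ C := by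
    intro x
    calc |deriv Real.smoothTransition x| ≤ C₀ := by simpa using hC₀ x
      _ ≤ C := le_max_left _ _
  refine ⟨2 * C, by linarith, ?_⟩
  intro N hN ε hε
  have hN0 : 0 < N := by linarith
  set L := Real.log (N / 2) with hLdef
  have hL : 0 < L := Real.log_pos (by rw [lt_div_iff₀ (by norm_num)]; linarith)
  have hlogN : 0 < Real.log N := Real.log_pos (by linarith)
  have hlogN2L : Real.log N ≤ 2 * L := by
    have h1 : Real.log N = Real.log (N / 2) + Real.log 2 := by
      rw [← Real.log_mul (by positivity) (by norm_num)]
      norm_num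
    have h2 : Real.log 2 ≤ Real.log (N / 2) :=
      Real.log_le_log (by norm_num) (by linarith)
    rw [hLdef]; linarith
  set k := (N / ε) ^ 2 with hkdef
  have hk : 0 < k := by positivity
  set u : ℝ → ℝ := fun y => Real.log (y ^ 2 * k) / (2 * L) with hudef
  set ψ : ℝ → ℝ := fun y => Real.smoothTransition (u y) with hψdef
  have haN : 0 < ε / N := by positivity
  have hab : ε / N < ε / 2 := by
    rw [div_lt_div_iff₀ (by linarith) (by norm_num)]; nlinarith
  -- ψ = 0 near the origin
  have hA : ∀ y : ℝ, |y| ≤ ε / N → ψ y = 0 := by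
    intro y hy
    apply Real.smoothTransition.zero_of_nonpos
    apply div_nonpos_of_nonpos_of_nonneg _ (by positivity)
    apply Real.log_nonpos (by positivity)
    have h1 : y ^ 2 ≤ (ε / N) ^ 2 := by
      rw [← sq_abs]
      exact pow_le_pow_left₀ (abs_nonneg y) hy 2
    calc y ^ 2 * k ≤ (ε / N) ^ 2 * (N / ε) ^ 2 :=
          mul_le_mul_of_nonneg_right h1 (le_of_lt hk)
      _ = 1 := by field_simp
  -- ψ = 1 far from the origin
  have h2L : 2 * L = Real.log ((N / 2) ^ 2) := by
    rw [Real.log_pow]; push_cast; ring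
  have hB : ∀ y : ℝ, ε / 2 ≤ |y| → ψ y = 1 := by
    intro y hy
    apply Real.smoothTransition.one_of_one_le
    rw [hudef]
    simp only []
    rw [le_div_iff₀ (by positivity), one_mul, h2L]
    apply Real.log_le_log (by positivity)
    have h1 : (ε / 2) ^ 2 ≤ y ^ 2 := by
      rw [← sq_abs y]
      exact pow_le_pow_left₀ (by positivity) hy 2
    calc (N / 2) ^ 2 = (ε / 2) ^ 2 * k := by rw [hkdef]; field_simp
      _ ≤ y ^ 2 * k := mul_le_mul_of_nonneg_right h1 (le_of_lt hk)
  -- smoothness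
  have hsmooth : ContDiff ℝ (⊤ : ℕ∞) ψ := by
    rw [contDiff_iff_contDiffAt]
    intro y
    by_cases hy : |y| < ε / N
    · have hopen : IsOpen {z : ℝ | |z| < ε / N} := isOpen_lt continuous_abs continuous_const
      have hev : ψ =ᶠ[nhds y] fun _ => 0 :=
        Filter.eventually_of_mem (hopen.mem_nhds hy) (fun z hz => hA z (le_of_lt hz))
      exact contDiffAt_const.congr_of_eventuallyEq hev
    · have hy0 : y ≠ 0 := by
        intro h; apply hy; rw [h, abs_zero]; exact haN
      have hne : y ^ 2 * k ≠ 0 := by positivity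
      have hinner : ContDiffAt ℝ (⊤ : ℕ∞) u y := by
        apply ContDiffAt.div_const
        exact (Real.contDiffAt_log.2 hne).comp y
          (((contDiff_id.pow 2).mul contDiff_const).contDiffAt)
      exact Real.smoothTransition.contDiffAt.comp y hinner
  -- the derivative away from 0
  have hderiv : ∀ y : ℝ, y ≠ 0 →
      deriv ψ y = deriv Real.smoothTransition (u y) / (L * y) := by
    intro y hy0
    have hne : y ^ 2 * k ≠ 0 := by positivity
    have h1 : HasDerivAt (fun z : ℝ => z ^ 2 * k) (2 * y * k) y := by
      simpa using ((hasDerivAt_pow 2 y).mul_const k)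
    have h2 : HasDerivAt (fun z : ℝ => Real.log (z ^ 2 * k))
        ((y ^ 2 * k)⁻¹ * (2 * y * k)) y := by
      have := (Real.hasDerivAt_log hne).comp y h1; exact this
    have h3 : HasDerivAt u ((y ^ 2 * k)⁻¹ * (2 * y * k) / (2 * L)) y := h2.div_const _
    have h4 : HasDerivAt Real.smoothTransition
        (deriv Real.smoothTransition (u y)) (u y) :=
      ((Real.smoothTransition.contDiff (n := (⊤:ℕ∞))).differentiable
        (by simp)).differentiableAt.hasDerivAt
    have h5 : HasDerivAt ψ
        (deriv Real.smoothTransition (u y) * ((y ^ 2 * k)⁻¹ * (2 * y * k) / (2 * L))) y :=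
      h4.comp y h3
    rw [h5.deriv]
    have heq : (y ^ 2 * k)⁻¹ * (2 * y * k) / (2 * L) = 1 / (L * y) := by
      field_simp
    rw [heq]; ring
  -- the derivative vanishes off [ε/N, ε/2]
  have hderiv0 : ∀ y : ℝ, ¬(ε / N ≤ |y| ∧ |y| ≤ ε / 2) → deriv ψ y = 0 := by
    intro y hy
    push_neg at hy
    by_cases h1 : |y| < ε / N
    · have hopen : IsOpen {z : ℝ | |z| < ε / N} := isOpen_lt continuous_abs continuous_const
      have hev : ψ =ᶠ[nhds y] fun _ => (0:ℝ) :=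
        Filter.eventually_of_mem (hopen.mem_nhds h1) (fun z hz => hA z (le_of_lt hz))
      rw [Filter.EventuallyEq.deriv_eq hev]; exact deriv_const y 0
    · have h2 : ε / 2 < |y| := hy (le_of_not_gt h1)
      have hopen : IsOpen {z : ℝ | ε / 2 < |z|} := isOpen_lt continuous_const continuous_abs
      have hev : ψ =ᶠ[nhds y] fun _ => (1:ℝ) :=
        Filter.eventually_of_mem (hopen.mem_nhds h2) (fun z hz => hB z (le_of_lt hz))
      rw [Filter.EventuallyEq.deriv_eq hev]; exact deriv_const y 1
  -- pointwise bound on the square of the derivative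
  set K : ℝ := C ^ 2 / L ^ 2 with hKdef
  have hKpos : 0 < K := by positivity
  have hptwise : ∀ β : ℝ, ∀ y : ℝ, ε / N ≤ |y| → |y| ≤ ε / 2 →
      (deriv ψ y) ^ 2 * |y| ^ β ≤ K * |y| ^ (β - 2) := by
    intro β y hy1 hy2
    have hy0 : y ≠ 0 := by
      intro h; rw [h, abs_zero] at hy1; linarith
    have hyabs : 0 < |y| := abs_pos.2 hy0
    set d : ℝ := deriv Real.smoothTransition (u y) with hddef
    have hd : d ^ 2 ≤ C ^ 2 := by
      rw [← sq_abs d]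
      exact pow_le_pow_left₀ (abs_nonneg d) (hC (u y)) 2
    rw [hderiv y hy0]
    have hrw : (d / (L * y)) ^ 2 * |y| ^ β = d ^ 2 * (|y| ^ β / (L ^ 2 * |y| ^ 2)) := by
      rw [div_pow, mul_pow, ← sq_abs y]; ring
    rw [hrw]
    have h2 : K * |y| ^ (β - 2) = C ^ 2 * (|y| ^ β / (L ^ 2 * |y| ^ 2)) := by
      rw [Real.rpow_sub hyabs]
      rw [show |y| ^ (2:ℝ) = |y| ^ (2:ℕ) by rw [← Real.rpow_natCast]; norm_num]
      have hL2 : L ^ 2 * L⁻¹ ^ 2 = 1 := by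
        rw [← mul_pow, mul_inv_cancel₀ hL.ne', one_pow]
      field_simp
      linear_combination C ^ 2 * hL2
    rw [h2]
    exact mul_le_mul_of_nonneg_right hd (by positivity)
  -- the main integral bound, for an arbitrary exponent β
  have hmain : ∀ β : ℝ,
      (∫ y : ℝ, (deriv ψ y) ^ 2 * |y| ^ β)
        ≤ 2 * K * ∫ y in (ε / N)..(ε / 2), y ^ (β - 2) := by
    intro β
    apply aux_integral_bound haN hab hKpos.le
    · intro y; positivity
    · exact hptwise β
    · intro y hy
      rw [hderiv0 y hy]
      ring
  refine ⟨ψ, hsmooth,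
    fun y => ⟨Real.smoothTransition.nonneg _, Real.smoothTransition.le_one _⟩,
    hB, hA, ?_⟩
  intro β hβ
  constructor
  · -- case β > 1
    intro hβ1
    have hI : (∫ y in (ε / N)..(ε / 2), y ^ (β - 2))
        = ((ε / 2) ^ (β - 1) - (ε / N) ^ (β - 1)) / (β - 1) := by
      rw [integral_rpow (Or.inl (by linarith : (-1:ℝ) < β - 2))]
      rw [show β - 2 + 1 = β - 1 from by ring]
    have hIle : (∫ y in (ε / N)..(ε / 2), y ^ (β - 2))
        ≤ (ε / 2) ^ (β - 1) / (β - 1) := by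
      rw [hI]
      apply div_le_div_of_nonneg_right ?_ (by linarith)
      · have := Real.rpow_nonneg haN.le (β - 1)
        linarith
    have hstep : (∫ y : ℝ, (deriv ψ y) ^ 2 * |y| ^ β)
        ≤ 2 * K * ((ε / 2) ^ (β - 1) / (β - 1)) := by
      calc (∫ y : ℝ, (deriv ψ y) ^ 2 * |y| ^ β)
          ≤ 2 * K * ∫ y in (ε / N)..(ε / 2), y ^ (β - 2) := hmain β
        _ ≤ 2 * K * ((ε / 2) ^ (β - 1) / (β - 1)) := by
            apply mul_le_mul_of_nonneg_left hIle (by positivity)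
    refine hstep.trans ?_
    have hsplit : ((ε:ℝ) / 2) ^ (β - 1) = ε ^ (β - 1) / 2 ^ (β - 1) := by
      rw [Real.div_rpow hε.le (by norm_num : (0:ℝ) ≤ 2)]
    have h2exp : (2:ℝ) ^ (2 - β) = 2 / 2 ^ (β - 1) := by
      rw [show (2:ℝ) - β = 1 - (β - 1) by ring, Real.rpow_sub (by norm_num), Real.rpow_one]
    have hP : (0:ℝ) < 2 ^ (β - 1) := Real.rpow_pos_of_pos (by norm_num) _
    have hE : (0:ℝ) ≤ ε ^ (β - 1) := Real.rpow_nonneg hε.le _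
    rw [hsplit, h2exp, hKdef]
    have hsq : Real.log N ^ 2 ≤ 4 * L ^ 2 := by nlinarith
    have e1 : 2 * (C ^ 2 / L ^ 2) * (ε ^ (β - 1) / 2 ^ (β - 1) / (β - 1))
        = (2 * C ^ 2 * (L ^ 2)⁻¹) * ((2 ^ (β - 1))⁻¹ * (β - 1)⁻¹ * ε ^ (β - 1)) := by
      rw [div_eq_mul_inv, div_eq_mul_inv, div_eq_mul_inv]
      ring
    have e2 : (2 * C) ^ 2 * (2 / 2 ^ (β - 1)) * (β - 1)⁻¹ * ((Real.log N) ^ 2)⁻¹ * ε ^ (β - 1)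
        = (8 * C ^ 2 * ((Real.log N) ^ 2)⁻¹) * ((2 ^ (β - 1))⁻¹ * (β - 1)⁻¹ * ε ^ (β - 1)) := by
      rw [div_eq_mul_inv]
      ring
    rw [e1, e2]
    have hnn : (0:ℝ) ≤ (2 ^ (β - 1))⁻¹ * (β - 1)⁻¹ * ε ^ (β - 1) := by
      apply mul_nonneg (mul_nonneg (inv_nonneg.2 hP.le) (inv_nonneg.2 (by linarith))) hE
    apply mul_le_mul_of_nonneg_right ?_ hnn
    have hinv : (4 * L ^ 2)⁻¹ ≤ ((Real.log N) ^ 2)⁻¹ := inv_anti₀ (by positivity) hsq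
    calc 2 * C ^ 2 * (L ^ 2)⁻¹ = 8 * C ^ 2 * (4 * L ^ 2)⁻¹ := by
          rw [mul_inv]
          ring
      _ ≤ 8 * C ^ 2 * ((Real.log N) ^ 2)⁻¹ :=
          mul_le_mul_of_nonneg_left hinv (by positivity)
  · -- case β = 1
    intro hβ1
    subst hβ1
    have hconv : (∫ y : ℝ, (deriv ψ y) ^ 2 * |y|)
        = ∫ y : ℝ, (deriv ψ y) ^ 2 * |y| ^ (1:ℝ) := by
      congr 1
      funext y
      rw [Real.rpow_one]
    have hIc : (∫ y in (ε / N)..(ε / 2), y ^ ((1:ℝ) - 2))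
        = ∫ y in (ε / N)..(ε / 2), y⁻¹ := by
      apply intervalIntegral.integral_congr
      intro y hy
      rw [Set.uIcc_of_le hab.le, Set.mem_Icc] at hy
      rw [show (1:ℝ) - 2 = -1 from by norm_num]
      exact Real.rpow_neg_one y
    have hIv : (∫ y in (ε / N)..(ε / 2), y⁻¹) = Real.log ((ε / 2) / (ε / N)) := by
      apply integral_inv
      rw [Set.uIcc_of_le hab.le]
      rintro ⟨h1, _⟩
      linarith
    have hIq : (ε / 2) / (ε / N) = N / 2 := by
      field_simp
    have hI : (∫ y in (ε / N)..(ε / 2), y ^ ((1:ℝ) - 2)) = L := by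
      rw [hIc, hIv, hIq]
    have h1 : (4 * L)⁻¹ ≤ (Real.log N)⁻¹ := inv_anti₀ hlogN (by linarith)
    calc (∫ y : ℝ, (deriv ψ y) ^ 2 * |y|)
        = ∫ y : ℝ, (deriv ψ y) ^ 2 * |y| ^ (1:ℝ) := hconv
      _ ≤ 2 * K * ∫ y in (ε / N)..(ε / 2), y ^ ((1:ℝ) - 2) := hmain 1
      _ = 8 * C ^ 2 * (4 * L)⁻¹ := by rw [hI, hKdef]; field_simp; ring
      _ ≤ 8 * C ^ 2 * (Real.log N)⁻¹ := mul_le_mul_of_nonneg_left h1 (by positivity)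
      _ = 2 * (2 * C) ^ 2 * (Real.log N)⁻¹ := by ring
end
end

section
/- Let β ≥ 1 and γ, μ > 0. For every u ∈ C^∞(ℝ²) with compact support and every ε > 0, there exists v ∈ C^∞(ℝ²) whose support is a compact subset of ℝ × (0,∞) such that ∫_ℍ ( y|D(u−v)|² + (1+y)(u−v)² ) 𝔴 dx dy < ε², where |Dw|² = w_x² + w_y². -/
open MeasureTheory Real Filter
open Set

noncomputable section

lemma deriv_st_zero_of_neg {t : ℝ} (ht : t < 0) : deriv Real.smoothTransition t = 0 := by
  have h : Real.smoothTransition =ᶠ[nhds t] fun _ => 0 :=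
    Filter.eventually_of_mem (Iio_mem_nhds ht)
      (fun s hs => Real.smoothTransition.zero_of_nonpos (le_of_lt hs))
  rw [h.deriv_eq]; simp

lemma deriv_st_zero_of_gt_one {t : ℝ} (ht : 1 < t) : deriv Real.smoothTransition t = 0 := by
  have h : Real.smoothTransition =ᶠ[nhds t] fun _ => 1 :=
    Filter.eventually_of_mem (Ioi_mem_nhds ht)
      (fun s hs => Real.smoothTransition.one_of_one_le (le_of_lt hs))
  rw [h.deriv_eq]; simp

lemma st_deriv_bound : ∃ K : ℝ, 0 ≤ K ∧ ∀ t, |deriv Real.smoothTransition t| ≤ K := by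
  have hc : Continuous (deriv Real.smoothTransition) :=
    (Real.smoothTransition.contDiff (n := (⊤ : ℕ∞))).continuous_deriv (by norm_num)
  have hcs : HasCompactSupport (deriv Real.smoothTransition) := by
    apply HasCompactSupport.intro (isCompact_Icc (a := (0:ℝ)) (b := 1))
    intro t ht
    simp only [mem_Icc, not_and_or, not_le] at ht
    rcases ht with h | h
    · exact deriv_st_zero_of_neg h
    · exact deriv_st_zero_of_gt_one h
  obtain ⟨K, hK⟩ := hcs.exists_bound_of_continuous hc
  exact ⟨max K 0, le_max_right _ _, fun t => by
    have := hK t; rw [Real.norm_eq_abs] at this; exact this.trans (le_max_left _ _)⟩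

lemma integrable_exp_neg_abs {γ : ℝ} (hγ : 0 < γ) :
    Integrable (fun x : ℝ => Real.exp (-γ * |x|)) := by
  have h1 : IntegrableOn (fun x : ℝ => Real.exp (-γ * |x|)) (Ici 0) := by
    rw [integrableOn_Ici_iff_integrableOn_Ioi]
    apply (exp_neg_integrableOn_Ioi 0 hγ).congr_fun _ measurableSet_Ioi
    intro x hx; simp only []; rw [abs_of_pos hx]
  have h2 : IntegrableOn (fun x : ℝ => Real.exp (-γ * |x|)) (Iic 0) := by
    have h : (Iic (0:ℝ)) = Neg.neg ⁻¹' (Ici 0) := by ext x; simp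
    rw [h]
    have := (MeasurePreserving.integrableOn_comp_preimage (Measure.measurePreserving_neg _)
      (Homeomorph.neg ℝ).measurableEmbedding).2 h1
    apply this.congr_fun _ ((measurableSet_Ici (a := (0:ℝ))).preimage measurable_neg)
    intro x hx; simp [abs_neg]
  have h : (univ : Set ℝ) = Iic 0 ∪ Ici 0 := by ext x; simp [le_total]
  rw [← integrableOn_univ, h]
  exact h2.union h1

/-- bounds for u, pdX u, pdY u -/
lemma u_bounds (u : ℝ × ℝ → ℝ) (hu : ContDiff ℝ (⊤ : ℕ∞) u) (hucs : HasCompactSupport u) :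
    ∃ M : ℝ, 0 ≤ M ∧ (∀ p, |u p| ≤ M) ∧ (∀ p, |pdX u p| ≤ M) ∧ (∀ p, |pdY u p| ≤ M) := by
  have hcu : Continuous u := hu.continuous
  have hcf : Continuous (fderiv ℝ u) := hu.continuous_fderiv (by simp)
  have hcsf : HasCompactSupport (fderiv ℝ u) := hucs.fderiv (𝕜 := ℝ)
  have hX : HasCompactSupport (pdX u) := by
    apply hcsf.comp_left (g := fun L : (ℝ × ℝ) →L[ℝ] ℝ => L (1, 0)) (by simp)
  have hY : HasCompactSupport (pdY u) := by
    apply hcsf.comp_left (g := fun L : (ℝ × ℝ) →L[ℝ] ℝ => L (0, 1)) (by simp)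
  have hcX : Continuous (pdX u) := hcf.clm_apply continuous_const
  have hcY : Continuous (pdY u) := hcf.clm_apply continuous_const
  obtain ⟨M1, h1⟩ := hucs.exists_bound_of_continuous hcu
  obtain ⟨M2, h2⟩ := hX.exists_bound_of_continuous hcX
  obtain ⟨M3, h3⟩ := hY.exists_bound_of_continuous hcY
  refine ⟨max (max M1 M2) (max M3 0), le_trans (le_max_right M3 0) (le_max_right _ _), ?_, ?_, ?_⟩
  · intro p; exact le_trans (h1 p) (le_trans (le_max_left _ _) (le_max_left _ _))
  · intro p; exact le_trans (h2 p) (le_trans (le_max_right _ _) (le_max_left _ _))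
  · intro p; exact le_trans (h3 p) (le_trans (le_max_left _ _) (le_max_right _ _))

section cutoff

variable (N : ℝ)

/-- the cutoff function -/
def phi (y : ℝ) : ℝ :=
  if 0 < y then Real.smoothTransition ((Real.log y + N ^ 2) / N) else 0

/-- its derivative (for y > 0) -/
def phid (y : ℝ) : ℝ :=
  deriv Real.smoothTransition ((Real.log y + N ^ 2) / N) * (y⁻¹ / N)

variable {N}

lemma phi_nonneg (y : ℝ) : 0 ≤ phi N y := by
  unfold phi; split
  · exact Real.smoothTransition.nonneg _
  · exact le_refl _

lemma phi_le_one (y : ℝ) : phi N y ≤ 1 := by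
  unfold phi; split
  · exact Real.smoothTransition.le_one _
  · norm_num

lemma phi_eq_zero (hN : 0 < N) {y : ℝ} (hy : y < Real.exp (-N ^ 2)) : phi N y = 0 := by
  unfold phi; split
  · next hy0 =>
    apply Real.smoothTransition.zero_of_nonpos
    apply le_of_lt
    apply div_neg_of_neg_of_pos _ hN
    have : Real.log y < -N ^ 2 := by
      calc Real.log y < Real.log (Real.exp (-N ^ 2)) := Real.log_lt_log hy0 hy
        _ = -N ^ 2 := Real.log_exp _
    linarith
  · rfl

lemma phi_eq_one (hN : 0 < N) {y : ℝ} (hy : Real.exp (N - N ^ 2) ≤ y) : phi N y = 1 := by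
  have hy0 : 0 < y := lt_of_lt_of_le (Real.exp_pos _) hy
  unfold phi
  rw [if_pos hy0]
  apply Real.smoothTransition.one_of_one_le
  rw [le_div_iff₀ hN]
  have : N - N ^ 2 ≤ Real.log y := by
    calc N - N ^ 2 = Real.log (Real.exp (N - N ^ 2)) := (Real.log_exp _).symm
      _ ≤ Real.log y := Real.log_le_log (Real.exp_pos _) hy
  linarith

lemma phi_contDiff (hN : 0 < N) : ContDiff ℝ (⊤ : ℕ∞) (phi N) := by
  rw [contDiff_iff_contDiffAt]
  intro y
  rcases lt_or_ge y (Real.exp (-N ^ 2)) with hy | hy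
  · apply ContDiffAt.congr_of_eventuallyEq contDiffAt_const
    filter_upwards [Iio_mem_nhds hy] with z hz
    exact phi_eq_zero hN hz
  · have hy0 : 0 < y := lt_of_lt_of_le (Real.exp_pos _) hy
    have hf : ContDiffAt ℝ (⊤ : ℕ∞) (fun z => Real.smoothTransition ((Real.log z + N ^ 2) / N)) y := by
      exact ContDiffAt.comp y Real.smoothTransition.contDiffAt
        (((Real.contDiffAt_log.mpr (ne_of_gt hy0)).add contDiffAt_const).div_const N)
    apply hf.congr_of_eventuallyEq
    filter_upwards [Ioi_mem_nhds hy0] with z hz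
    have hz' : 0 < z := hz
    unfold phi; rw [if_pos hz']

lemma phi_hasDerivAt (hN : 0 < N) {y : ℝ} (hy0 : 0 < y) :
    HasDerivAt (phi N) (phid N y) y := by
  have hg : HasDerivAt Real.smoothTransition
      (deriv Real.smoothTransition ((Real.log y + N ^ 2) / N)) ((Real.log y + N ^ 2) / N) :=
    ((Real.smoothTransition.contDiff (n := (⊤ : ℕ∞))).differentiable
      (by simp) _).hasDerivAt
  have hh : HasDerivAt (fun z => (Real.log z + N ^ 2) / N) (y⁻¹ / N) y :=
    (((Real.hasDerivAt_log (ne_of_gt hy0)).add_const (N ^ 2)).div_const N)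
  have := HasDerivAt.comp y hg hh
  apply this.congr_of_eventuallyEq
  filter_upwards [Ioi_mem_nhds hy0] with z hz
  have hz' : 0 < z := hz
  unfold phi; rw [if_pos hz']; rfl

lemma phid_eq_zero_of_lt (hN : 0 < N) {y : ℝ} (hy0 : 0 < y) (hy : y < Real.exp (-N ^ 2)) :
    phid N y = 0 := by
  unfold phid
  rw [deriv_st_zero_of_neg, zero_mul]
  apply div_neg_of_neg_of_pos _ hN
  have : Real.log y < -N ^ 2 := by
    calc Real.log y < Real.log (Real.exp (-N ^ 2)) := Real.log_lt_log hy0 hy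
      _ = -N ^ 2 := Real.log_exp _
  linarith

lemma phid_eq_zero_of_gt (hN : 0 < N) {y : ℝ} (hy : Real.exp (N - N ^ 2) < y) :
    phid N y = 0 := by
  have hy0 : 0 < y := lt_trans (Real.exp_pos _) hy
  unfold phid
  rw [deriv_st_zero_of_gt_one, zero_mul]
  rw [lt_div_iff₀ hN]
  have : N - N ^ 2 < Real.log y := by
    calc N - N ^ 2 = Real.log (Real.exp (N - N ^ 2)) := (Real.log_exp _).symm
      _ < Real.log y := Real.log_lt_log (Real.exp_pos _) hy
  linarith

end cutoff

lemma inv_integrableOn {a r : ℝ} (ha : 0 < a) : IntegrableOn (fun y : ℝ => y⁻¹) (Icc a r) := by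
  apply ContinuousOn.integrableOn_compact isCompact_Icc
  apply ContinuousOn.inv₀ continuousOn_id
  intro z hz; exact ne_of_gt (lt_of_lt_of_le ha hz.1)

lemma inv_integral {a r : ℝ} (ha : 0 < a) (har : a ≤ r) :
    ∫ y in Icc a r, y⁻¹ = Real.log r - Real.log a := by
  rw [integral_Icc_eq_integral_Ioc, ← intervalIntegral.integral_of_le har,
    integral_inv_of_pos ha (lt_of_lt_of_le ha har),
    Real.log_div (ne_of_gt (lt_of_lt_of_le ha har)) (ne_of_gt ha)]

lemma indicator_one_integral {r : ℝ} (hr : 0 ≤ r) :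
    (Integrable ((Ioc (0:ℝ) r).indicator (fun _ => (1:ℝ)))) ∧
    ∫ y : ℝ, (Ioc (0:ℝ) r).indicator (fun _ => (1:ℝ)) y = r := by
  constructor
  · rw [integrable_indicator_iff measurableSet_Ioc]
    exact integrableOn_const (by rw [Real.volume_Ioc]; exact ENNReal.ofReal_ne_top)
  · rw [integral_indicator measurableSet_Ioc, setIntegral_const, smul_eq_mul, mul_one,
      measureReal_def, Real.volume_Ioc, ENNReal.toReal_ofReal (by linarith), sub_zero]

lemma pd_sub {N : ℝ} (hN : 0 < N) (u : ℝ × ℝ → ℝ) (hu : ContDiff ℝ (⊤ : ℕ∞) u)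
    (p : ℝ × ℝ) (hp : 0 < p.2) :
    pdX (u - fun q => u q * phi N q.2) p = (1 - phi N p.2) * pdX u p ∧
    pdY (u - fun q => u q * phi N q.2) p = (1 - phi N p.2) * pdY u p - u p * phid N p.2 := by
  have hdu : DifferentiableAt ℝ u p := (hu.differentiable (by simp)).differentiableAt
  have hphi : HasFDerivAt (fun q : ℝ × ℝ => phi N q.2)
      ((phid N p.2) • ContinuousLinearMap.snd ℝ ℝ ℝ) p :=
    (phi_hasDerivAt hN hp).comp_hasFDerivAt p hasFDerivAt_snd
  have hv : HasFDerivAt (fun q => u q * phi N q.2)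
      (u p • ((phid N p.2) • ContinuousLinearMap.snd ℝ ℝ ℝ) + (fderiv ℝ u p).smulRight (phi N p.2)) p :=
    (hdu.hasFDerivAt).mul' hphi
  have hfd : fderiv ℝ (u - fun q => u q * phi N q.2) p =
      fderiv ℝ u p -
        (u p • ((phid N p.2) • ContinuousLinearMap.snd ℝ ℝ ℝ) + (fderiv ℝ u p).smulRight (phi N p.2)) :=
    HasFDerivAt.fderiv (by exact (hdu.hasFDerivAt).sub hv)
  constructor
  · unfold pdX
    rw [hfd]
    simp only [ContinuousLinearMap.sub_apply, ContinuousLinearMap.add_apply,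
      ContinuousLinearMap.smul_apply, ContinuousLinearMap.coe_snd', ContinuousLinearMap.smulRight_apply, smul_eq_mul]
    ring
  · unfold pdY
    rw [hfd]
    simp only [ContinuousLinearMap.sub_apply, ContinuousLinearMap.add_apply,
      ContinuousLinearMap.smul_apply, ContinuousLinearMap.coe_snd', ContinuousLinearMap.smulRight_apply, smul_eq_mul]
    ring

lemma sub_sq_le_two_sq (x y : ℝ) : (x - y) ^ 2 ≤ 2 * x ^ 2 + 2 * y ^ 2 := by
  nlinarith [sq_nonneg (x + y)]

set_option maxHeartbeats 1000000 in
/-- density, in the weighted H¹ norm, of smooth functions compactly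
supported away from the boundary, when β ≥ 1. -/
theorem stmt10 (β γ μ : ℝ) (hβ : 1 ≤ β) (hγ : 0 < γ) (hμ : 0 < μ)
    (u : ℝ × ℝ → ℝ) (hu : ContDiff ℝ (⊤ : ℕ∞) u) (hucs : HasCompactSupport u)
    (ε : ℝ) (hε : 0 < ε) :
    ∃ v : ℝ × ℝ → ℝ, ContDiff ℝ (⊤ : ℕ∞) v ∧ HasCompactSupport v ∧ tsupport v ⊆ UHP ∧
      ∫ p in UHP,
          (p.2 * ((pdX (u - v) p) ^ 2 + (pdY (u - v) p) ^ 2)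
            + (1 + p.2) * (u p - v p) ^ 2) * hw β γ μ p < ε ^ 2 := by
  obtain ⟨M, hM0, hMu, hMx, hMy⟩ := u_bounds u hu hucs
  obtain ⟨K, hK0, hK⟩ := st_deriv_bound
  obtain ⟨A, hA⟩ : ∃ A : ℝ, A = ∫ x : ℝ, Real.exp (-γ * |x|) := ⟨_, rfl⟩
  have hA0 : 0 ≤ A := hA ▸ integral_nonneg fun x => (Real.exp_pos _).le
  obtain ⟨C, hC⟩ : ∃ C : ℝ, C = A * (5 * M ^ 2 + 2 * M ^ 2 * K ^ 2) := ⟨_, rfl⟩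
  have hC0 : 0 ≤ C := hC ▸ mul_nonneg hA0 (by positivity)
  have hε2 : 0 < ε ^ 2 := by positivity
  obtain ⟨N, hN2, hCN⟩ : ∃ N : ℝ, 2 ≤ N ∧ C / N < ε ^ 2 := by
    refine ⟨max 2 (C / ε ^ 2 + 1), le_max_left _ _, ?_⟩
    have hN0 : (0:ℝ) < max 2 (C / ε ^ 2 + 1) := lt_of_lt_of_le (by norm_num) (le_max_left _ _)
    rw [div_lt_iff₀ hN0]
    have h1 : C / ε ^ 2 < max 2 (C / ε ^ 2 + 1) :=
      lt_of_lt_of_le (lt_add_one _) (le_max_right _ _)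
    have h2 : C < max 2 (C / ε ^ 2 + 1) * ε ^ 2 := (div_lt_iff₀ hε2).1 h1
    linarith
  have hN0 : (0:ℝ) < N := by linarith
  obtain ⟨a, ha_def⟩ : ∃ a : ℝ, a = Real.exp (-N ^ 2) := ⟨_, rfl⟩
  obtain ⟨r, hr_def⟩ : ∃ r : ℝ, r = Real.exp (N - N ^ 2) := ⟨_, rfl⟩
  have ha : 0 < a := ha_def ▸ Real.exp_pos _
  have hr0 : 0 < r := hr_def ▸ Real.exp_pos _
  have har : a ≤ r := by rw [ha_def, hr_def]; exact Real.exp_le_exp.2 (by linarith)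
  have hNN : 0 ≤ N * (N - 1) := mul_nonneg (by linarith) (by linarith)
  have hNN2 : 0 ≤ N * (N - 2) := mul_nonneg (by linarith) (by linarith)
  have hr1 : r ≤ 1 := by
    rw [hr_def]; exact Real.exp_le_one_iff.2 (by nlinarith [hNN])
  have hrN : r ≤ N⁻¹ := by
    have h1 : r ≤ Real.exp (-N) := by
      rw [hr_def]; exact Real.exp_le_exp.2 (by nlinarith [hNN2])
    have h2 : N ≤ Real.exp N := by linarith [Real.add_one_le_exp N]
    calc r ≤ Real.exp (-N) := h1
      _ = (Real.exp N)⁻¹ := Real.exp_neg N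
      _ ≤ N⁻¹ := inv_anti₀ hN0 h2
  -- specialized cutoff facts
  have hphi_zero : ∀ {y : ℝ}, y < a → phi N y = 0 := fun {y} hy =>
    phi_eq_zero hN0 (ha_def ▸ hy)
  have hphi_one : ∀ {y : ℝ}, r ≤ y → phi N y = 1 := fun {y} hy =>
    phi_eq_one hN0 (hr_def ▸ hy)
  have hphid_lt : ∀ {y : ℝ}, 0 < y → y < a → phid N y = 0 := fun {y} hy0 hy =>
    phid_eq_zero_of_lt hN0 hy0 (ha_def ▸ hy)
  have hphid_gt : ∀ {y : ℝ}, r < y → phid N y = 0 := fun {y} hy =>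
    phid_eq_zero_of_gt hN0 (hr_def ▸ hy)
  -- the weight functions for domination
  obtain ⟨E, hE⟩ : ∃ E : ℝ → ℝ, E = fun x => Real.exp (-γ * |x|) := ⟨_, rfl⟩
  have hE0 : ∀ x, 0 < E x := fun x => hE ▸ Real.exp_pos _
  obtain ⟨G, hGdef⟩ : ∃ G : ℝ → ℝ, G = fun y =>
      5 * M ^ 2 * (Ioc (0:ℝ) r).indicator (fun _ => (1:ℝ)) y
      + (2 * M ^ 2 * K ^ 2 / N ^ 2) * (Icc a r).indicator (fun z => z⁻¹) y := ⟨_, rfl⟩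
  have hind2_nonneg : ∀ y : ℝ, 0 ≤ (Icc a r).indicator (fun z => z⁻¹) y := by
    intro y
    apply Set.indicator_nonneg; intro z hz
    have : 0 < z := lt_of_lt_of_le ha hz.1
    positivity
  have hG0 : ∀ y, 0 ≤ G y := by
    intro y
    rw [hGdef]
    apply add_nonneg
    · apply mul_nonneg (by positivity)
      apply Set.indicator_nonneg; intro z _; norm_num
    · exact mul_nonneg (by positivity) (hind2_nonneg y)
  have hGint : Integrable G := by
    rw [hGdef]
    exact (((indicator_one_integral hr0.le).1).const_mul _).add
      (((integrable_indicator_iff measurableSet_Icc).2 (inv_integrableOn ha)).const_mul _)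
  have hGval : ∫ y : ℝ, G y = 5 * M ^ 2 * r + 2 * M ^ 2 * K ^ 2 / N := by
    rw [hGdef]
    rw [integral_add (((indicator_one_integral hr0.le).1).const_mul _)
      (((integrable_indicator_iff measurableSet_Icc).2 (inv_integrableOn ha)).const_mul _),
      integral_const_mul, integral_const_mul, (indicator_one_integral hr0.le).2,
      integral_indicator measurableSet_Icc, inv_integral ha har]
    rw [hr_def, ha_def, Real.log_exp, Real.log_exp]
    have hNe : N ≠ 0 := ne_of_gt hN0
    field_simp
    ring
  have hFG : Integrable (fun p : ℝ × ℝ => E p.1 * G p.2) := by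
    have hEint : Integrable E := by rw [hE]; exact integrable_exp_neg_abs hγ
    have h := hEint.mul_prod hGint
    rwa [← Measure.volume_eq_prod] at h
  -- the candidate v
  refine ⟨fun q => u q * phi N q.2, ?_, ?_, ?_, ?_⟩
  · exact hu.mul ((phi_contDiff hN0).comp contDiff_snd)
  · apply hucs.mono
    intro p hp
    simp only [Function.mem_support] at hp ⊢
    intro h0; exact hp (by rw [h0, zero_mul])
  · have hsub : Function.support (fun q => u q * phi N q.2) ⊆ {p : ℝ × ℝ | a ≤ p.2} := by
      intro p hp
      simp only [Function.mem_support] at hp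
      by_contra hcon
      simp only [Set.mem_setOf_eq, not_le] at hcon
      exact hp (by rw [hphi_zero hcon, mul_zero])
    have hclosed : IsClosed {p : ℝ × ℝ | a ≤ p.2} := isClosed_le continuous_const continuous_snd
    intro p hp
    have := closure_minimal hsub hclosed hp
    exact lt_of_lt_of_le ha this
  · -- the pointwise bound
    have hpt : ∀ p ∈ UHP,
        (p.2 * ((pdX (u - fun q => u q * phi N q.2) p) ^ 2
            + (pdY (u - fun q => u q * phi N q.2) p) ^ 2)
          + (1 + p.2) * (u p - (fun q => u q * phi N q.2) p) ^ 2) * hw β γ μ p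
        ≤ E p.1 * G p.2 := by
      intro p hp
      have hy : 0 < p.2 := hp
      obtain ⟨hwx, hwy⟩ := pd_sub hN0 u hu p hy
      rw [hwx, hwy]
      simp only []
      have hEG0 : 0 ≤ E p.1 * G p.2 := mul_nonneg (hE0 _).le (hG0 _)
      rcases le_or_gt p.2 r with hyr | hyr
      · -- main case : p.2 ≤ r
        have hind1 : (Ioc (0:ℝ) r).indicator (fun _ => (1:ℝ)) p.2 = 1 :=
          Set.indicator_of_mem (show p.2 ∈ Ioc (0:ℝ) r from ⟨hy, hyr⟩) _
        have hs1 : (1 - phi N p.2) ^ 2 ≤ 1 := by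
          have hp0 := phi_nonneg (N := N) p.2
          have hp1 := phi_le_one (N := N) p.2
          have hpp : phi N p.2 * phi N p.2 ≤ phi N p.2 * 1 :=
            mul_le_mul_of_nonneg_left hp1 hp0
          have hexp : (1 - phi N p.2) ^ 2
              = 1 - 2 * phi N p.2 + phi N p.2 * phi N p.2 := by ring
          rw [hexp]; linarith
        have hux2 : (pdX u p) ^ 2 ≤ M ^ 2 :=
          sq_le_sq' (neg_le_of_abs_le (hMx p)) (le_of_abs_le (hMx p))
        have huy2 : (pdY u p) ^ 2 ≤ M ^ 2 :=
          sq_le_sq' (neg_le_of_abs_le (hMy p)) (le_of_abs_le (hMy p))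
        have hu2 : (u p) ^ 2 ≤ M ^ 2 :=
          sq_le_sq' (neg_le_of_abs_le (hMu p)) (le_of_abs_le (hMu p))
        -- bound on y * phid^2
        have hyphi : p.2 * (phid N p.2) ^ 2
            ≤ K ^ 2 / N ^ 2 * (Icc a r).indicator (fun z => z⁻¹) p.2 := by
          rcases lt_or_ge p.2 a with hlt | hge
          · rw [hphid_lt hy hlt,
              Set.indicator_of_notMem (fun hc => absurd hc.1 (not_le.2 hlt))]
            simp
          · have hmem : p.2 ∈ Icc a r := ⟨hge, hyr⟩
            rw [Set.indicator_of_mem hmem]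
            have habs : |phid N p.2| ≤ K * (p.2⁻¹ / N) := by
              unfold phid
              rw [abs_mul]
              have h1 : |p.2⁻¹ / N| = p.2⁻¹ / N := abs_of_nonneg (by positivity)
              rw [h1]
              exact mul_le_mul_of_nonneg_right (hK _) (by positivity)
            have hsq : (phid N p.2) ^ 2 ≤ (K * (p.2⁻¹ / N)) ^ 2 := by
              rw [← sq_abs]
              exact pow_le_pow_left₀ (abs_nonneg _) habs 2
            have heq : p.2 * (K * (p.2⁻¹ / N)) ^ 2 = K ^ 2 / N ^ 2 * p.2⁻¹ := by
              field_simp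
            calc p.2 * (phid N p.2) ^ 2 ≤ p.2 * (K * (p.2⁻¹ / N)) ^ 2 :=
                  mul_le_mul_of_nonneg_left hsq hy.le
              _ = K ^ 2 / N ^ 2 * p.2⁻¹ := heq
        -- bracket bound
        have hy1 : p.2 ≤ 1 := le_trans hyr hr1
        have h1 : ((1 - phi N p.2) * pdX u p) ^ 2 ≤ M ^ 2 := by
          rw [mul_pow]
          calc (1 - phi N p.2) ^ 2 * (pdX u p) ^ 2 ≤ 1 * (pdX u p) ^ 2 :=
                mul_le_mul_of_nonneg_right hs1 (sq_nonneg _)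
            _ = (pdX u p) ^ 2 := one_mul _
            _ ≤ M ^ 2 := hux2
        have hb : (u p * phid N p.2) ^ 2 ≤ M ^ 2 * (phid N p.2) ^ 2 := by
          rw [mul_pow]
          exact mul_le_mul_of_nonneg_right hu2 (sq_nonneg _)
        have ha1 : ((1 - phi N p.2) * pdY u p) ^ 2 ≤ M ^ 2 := by
          rw [mul_pow]
          calc (1 - phi N p.2) ^ 2 * (pdY u p) ^ 2 ≤ 1 * (pdY u p) ^ 2 :=
                mul_le_mul_of_nonneg_right hs1 (sq_nonneg _)
            _ = (pdY u p) ^ 2 := one_mul _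
            _ ≤ M ^ 2 := huy2
        have h2 : ((1 - phi N p.2) * pdY u p - u p * phid N p.2) ^ 2
            ≤ 2 * M ^ 2 + 2 * (M ^ 2 * (phid N p.2) ^ 2) := by
          have hkey := sub_sq_le_two_sq ((1 - phi N p.2) * pdY u p) (u p * phid N p.2)
          linarith [ha1, hb]
        have h3 : (u p - u p * phi N p.2) ^ 2 ≤ M ^ 2 := by
          have he : (u p - u p * phi N p.2) = (1 - phi N p.2) * u p := by ring
          rw [he, mul_pow]
          calc (1 - phi N p.2) ^ 2 * (u p) ^ 2 ≤ 1 * (u p) ^ 2 :=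
                mul_le_mul_of_nonneg_right hs1 (sq_nonneg _)
            _ = (u p) ^ 2 := one_mul _
            _ ≤ M ^ 2 := hu2
        have hB : p.2 * (((1 - phi N p.2) * pdX u p) ^ 2
              + ((1 - phi N p.2) * pdY u p - u p * phid N p.2) ^ 2)
            + (1 + p.2) * (u p - u p * phi N p.2) ^ 2 ≤ G p.2 := by
          rw [hGdef]
          simp only [hind1, mul_one]
          have e1 : p.2 * ((1 - phi N p.2) * pdX u p) ^ 2 ≤ M ^ 2 := by
            calc p.2 * ((1 - phi N p.2) * pdX u p) ^ 2
                ≤ 1 * ((1 - phi N p.2) * pdX u p) ^ 2 :=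
                  mul_le_mul_of_nonneg_right hy1 (sq_nonneg _)
              _ = ((1 - phi N p.2) * pdX u p) ^ 2 := one_mul _
              _ ≤ M ^ 2 := h1
          have e2 : p.2 * ((1 - phi N p.2) * pdY u p - u p * phid N p.2) ^ 2
              ≤ 2 * M ^ 2 + 2 * M ^ 2 * (p.2 * (phid N p.2) ^ 2) := by
            have t1 : p.2 * ((1 - phi N p.2) * pdY u p - u p * phid N p.2) ^ 2
                ≤ p.2 * (2 * M ^ 2 + 2 * (M ^ 2 * (phid N p.2) ^ 2)) :=
              mul_le_mul_of_nonneg_left h2 hy.le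
            have t3 : 2 * M ^ 2 * p.2 ≤ 2 * M ^ 2 * 1 :=
              mul_le_mul_of_nonneg_left hy1 (by positivity)
            have t2 : p.2 * (2 * M ^ 2 + 2 * (M ^ 2 * (phid N p.2) ^ 2))
                = 2 * M ^ 2 * p.2 + 2 * M ^ 2 * (p.2 * (phid N p.2) ^ 2) := by ring
            rw [t2] at t1
            linarith
          have e3 : (1 + p.2) * (u p - u p * phi N p.2) ^ 2 ≤ 2 * M ^ 2 := by
            calc (1 + p.2) * (u p - u p * phi N p.2) ^ 2 ≤ 2 * (u p - u p * phi N p.2) ^ 2 :=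
                mul_le_mul_of_nonneg_right (by linarith) (sq_nonneg _)
              _ ≤ 2 * M ^ 2 := by linarith [h3]
          have e4 : 2 * M ^ 2 * (p.2 * (phid N p.2) ^ 2)
              ≤ 2 * M ^ 2 * (K ^ 2 / N ^ 2 * (Icc a r).indicator (fun z => z⁻¹) p.2) :=
            mul_le_mul_of_nonneg_left hyphi (by positivity)
          have e5 : 2 * M ^ 2 * (K ^ 2 / N ^ 2 * (Icc a r).indicator (fun z => z⁻¹) p.2)
              = 2 * M ^ 2 * K ^ 2 / N ^ 2 * (Icc a r).indicator (fun z => z⁻¹) p.2 := by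
            ring
          linarith [e1, e2, e3, e4]
        -- weight bound
        have hhw : hw β γ μ p ≤ E p.1 := by
          unfold hw
          rw [hE]
          have h4 : p.2 ^ (β - 1) ≤ 1 :=
            Real.rpow_le_one hy.le hy1 (by linarith)
          have h5 : Real.exp (-γ * |p.1| - μ * p.2) ≤ Real.exp (-γ * |p.1|) :=
            Real.exp_le_exp.2 (by
              have := mul_nonneg hμ.le hy.le
              linarith)
          calc p.2 ^ (β - 1) * Real.exp (-γ * |p.1| - μ * p.2)
              ≤ 1 * Real.exp (-γ * |p.1|) :=
                mul_le_mul h4 h5 (Real.exp_pos _).le (by norm_num)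
            _ = Real.exp (-γ * |p.1|) := one_mul _
        have hhw0 : 0 ≤ hw β γ μ p :=
          mul_nonneg (Real.rpow_nonneg hy.le _) (Real.exp_pos _).le
        calc (p.2 * (((1 - phi N p.2) * pdX u p) ^ 2
              + ((1 - phi N p.2) * pdY u p - u p * phid N p.2) ^ 2)
            + (1 + p.2) * (u p - u p * phi N p.2) ^ 2) * hw β γ μ p
            ≤ G p.2 * E p.1 := by
              apply mul_le_mul hB hhw hhw0 (hG0 _)
          _ = E p.1 * G p.2 := mul_comm _ _
      · -- trivial case : r < p.2
        rw [hphi_one hyr.le, hphid_gt hyr]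
        have hz : (p.2 * (((1:ℝ) - 1) * pdX u p) ^ 2
            + ((1 - 1) * pdY u p - u p * 0) ^ 2 * p.2⁻¹ * p.2) = 0 := by ring
        calc (p.2 * ((((1:ℝ) - 1) * pdX u p) ^ 2
              + (((1:ℝ) - 1) * pdY u p - u p * 0) ^ 2)
            + (1 + p.2) * (u p - u p * 1) ^ 2) * hw β γ μ p
            = 0 := by ring_nf
          _ ≤ E p.1 * G p.2 := hEG0
    -- now the integral chain
    have hmeas : MeasurableSet UHP := measurableSet_lt measurable_const measurable_snd
    have hnn : ∀ p ∈ UHP,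
        0 ≤ (p.2 * ((pdX (u - fun q => u q * phi N q.2) p) ^ 2
            + (pdY (u - fun q => u q * phi N q.2) p) ^ 2)
          + (1 + p.2) * (u p - (fun q => u q * phi N q.2) p) ^ 2) * hw β γ μ p := by
      intro p hp
      have hy : 0 < p.2 := hp
      have hhw0 : 0 ≤ hw β γ μ p :=
        mul_nonneg (Real.rpow_nonneg hy.le _) (Real.exp_pos _).le
      apply mul_nonneg _ hhw0
      apply add_nonneg
      · exact mul_nonneg hy.le (add_nonneg (sq_nonneg _) (sq_nonneg _))
      · exact mul_nonneg (by linarith) (sq_nonneg _)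
    calc ∫ p in UHP,
          (p.2 * ((pdX (u - fun q => u q * phi N q.2) p) ^ 2
              + (pdY (u - fun q => u q * phi N q.2) p) ^ 2)
            + (1 + p.2) * (u p - (fun q => u q * phi N q.2) p) ^ 2) * hw β γ μ p
        ≤ ∫ p in UHP, E p.1 * G p.2 := by
          apply integral_mono_of_nonneg
          · exact (ae_restrict_iff' hmeas).2 (ae_of_all _ hnn)
          · exact hFG.restrict
          · exact (ae_restrict_iff' hmeas).2 (ae_of_all _ hpt)
      _ ≤ ∫ p : ℝ × ℝ, E p.1 * G p.2 :=
          setIntegral_le_integral hFG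
            (ae_of_all _ fun p => mul_nonneg (hE0 _).le (hG0 _))
      _ = (∫ x : ℝ, E x) * ∫ y : ℝ, G y := by
          rw [Measure.volume_eq_prod, integral_prod_mul]
      _ = A * (5 * M ^ 2 * r + 2 * M ^ 2 * K ^ 2 / N) := by
          rw [hGval, hA, hE]
      _ ≤ C / N := by
          have h6 : 5 * M ^ 2 * r + 2 * M ^ 2 * K ^ 2 / N
              ≤ (5 * M ^ 2 + 2 * M ^ 2 * K ^ 2) / N := by
            rw [add_div]
            have h7 : 5 * M ^ 2 * r ≤ 5 * M ^ 2 / N := by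
              rw [div_eq_mul_inv]
              exact mul_le_mul_of_nonneg_left hrN (by positivity)
            linarith
          calc A * (5 * M ^ 2 * r + 2 * M ^ 2 * K ^ 2 / N)
              ≤ A * ((5 * M ^ 2 + 2 * M ^ 2 * K ^ 2) / N) :=
                mul_le_mul_of_nonneg_left h6 hA0
            _ = C / N := by rw [hC]; ring
      _ < ε ^ 2 := hCN
end
end

section
/- Let β, γ, μ > 0, let x₀ ∈ ℝ, and let O := (x₀,∞) × (0,∞). There exists a constant C > 0, depending only on γ, such that for every u ∈ C¹(ℝ²) with compact support: ∫₀^∞ u(x₀,y)² y^β e^{−γ|x₀| − μy} dy ≤ C ∫_O ( y|Du|² + (1+y)u² ) 𝔴 dx dy, where |Du|² = u_x² + u_y². -/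
open MeasureTheory Real Filter

noncomputable section

set_option maxHeartbeats 2000000 in
/-- Γ₁-boundary trace estimate on the quadrant O = (x₀,∞) × (0,∞);
the constant C depends only on γ. -/
theorem stmt11 :
    ∀ γ : ℝ, 0 < γ → ∃ C : ℝ, 0 < C ∧
      ∀ β μ : ℝ, 0 < β → 0 < μ → ∀ x₀ : ℝ,
        ∀ u : ℝ × ℝ → ℝ, ContDiff ℝ 1 u → HasCompactSupport u →
          (∫ y in Set.Ioi (0 : ℝ),
              (u (x₀, y)) ^ 2 * y ^ β * Real.exp (-γ * |x₀| - μ * y))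
            ≤ C * ∫ p in Set.Ioi x₀ ×ˢ Set.Ioi (0 : ℝ),
                (p.2 * ((pdX u p) ^ 2 + (pdY u p) ^ 2) + (1 + p.2) * (u p) ^ 2)
                  * hw β γ μ p := by
  intro γ hγ
  refine ⟨1 + γ, by linarith, ?_⟩
  intro β μ hβ hμ x₀ u hu hcs
  -- Basic regularity facts
  have hcu : Continuous u := hu.continuous
  have hpdX : Continuous (pdX u) := (hu.continuous_fderiv one_ne_zero).clm_apply continuous_const
  have hpdY : Continuous (pdY u) := (hu.continuous_fderiv one_ne_zero).clm_apply continuous_const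
  have hu0 : ∀ p : ℝ × ℝ, p ∉ tsupport u → u p = 0 := fun p hp =>
    image_eq_zero_of_notMem_tsupport hp
  have hpdX0 : ∀ p : ℝ × ℝ, p ∉ tsupport u → pdX u p = 0 := by
    intro p hp
    have : fderiv ℝ u p = 0 :=
      Function.notMem_support.mp (fun h => hp (support_fderiv_subset ℝ h))
    simp [pdX, this]
  have hpdY0 : ∀ p : ℝ × ℝ, p ∉ tsupport u → pdY u p = 0 := by
    intro p hp
    have : fderiv ℝ u p = 0 :=
      Function.notMem_support.mp (fun h => hp (support_fderiv_subset ℝ h))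
    simp [pdY, this]
  -- a radius containing the support
  obtain ⟨R, hR⟩ := hcs.isBounded.subset_closedBall (0 : ℝ × ℝ)
  have hout : ∀ x y : ℝ, R < |x| → ((x, y) : ℝ × ℝ) ∉ tsupport u := by
    intro x y hx hmem
    have h1 := hR hmem
    rw [Metric.mem_closedBall, dist_zero_right] at h1
    have : |x| ≤ R := le_trans (by simpa using norm_fst_le ((x, y) : ℝ × ℝ)) h1
    linarith
  have habs : ∀ x : ℝ, x ∉ Set.Icc (-R) R → R < |x| := by
    intro x hx
    rw [Set.mem_Icc, not_and_or, not_le, not_le] at hx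
    rcases hx with h | h
    · calc R < -x := by linarith
        _ ≤ |x| := (neg_le_abs x)
    · exact lt_of_lt_of_le h (le_abs_self x)
  -- a global bound
  obtain ⟨B, hB⟩ : ∃ B : ℝ, ∀ p : ℝ × ℝ,
      (pdX u p) ^ 2 + (pdY u p) ^ 2 + (u p) ^ 2 ≤ B := by
    have hv : Continuous fun p : ℝ × ℝ => (pdX u p) ^ 2 + (pdY u p) ^ 2 + (u p) ^ 2 :=
      ((hpdX.pow 2).add (hpdY.pow 2)).add (hcu.pow 2)
    have hvs : HasCompactSupport fun p : ℝ × ℝ =>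
        (pdX u p) ^ 2 + (pdY u p) ^ 2 + (u p) ^ 2 := by
      apply HasCompactSupport.intro hcs
      intro p hp
      simp [hu0 p hp, hpdX0 p hp, hpdY0 p hp]
    obtain ⟨C, hC⟩ := hv.bounded_above_of_compact_support hvs
    exact ⟨C, fun p => le_trans (le_abs_self _) (hC p)⟩
  have hBD : ∀ p : ℝ × ℝ, (pdX u p) ^ 2 + (pdY u p) ^ 2 ≤ B := fun p => by
    nlinarith [hB p, sq_nonneg (u p)]
  have hBU : ∀ p : ℝ × ℝ, (u p) ^ 2 ≤ B := fun p => by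
    nlinarith [hB p, sq_nonneg (pdX u p), sq_nonneg (pdY u p)]
  have hB0 : 0 ≤ B := le_trans (by positivity) (hB 0)
  have hBg : ∀ p : ℝ × ℝ, (pdX u p) ^ 2 + (1 + γ) * (u p) ^ 2 ≤ (1 + γ) * B := fun p => by
    nlinarith [hB p, sq_nonneg (pdY u p), sq_nonneg (pdX u p), sq_nonneg (u p), hγ.le]
  -- STEP A : one-dimensional trace inequality in the x variable, for each fixed y.
  have stepA : ∀ y : ℝ,
      (u (x₀, y)) ^ 2 * Real.exp (-γ * |x₀|) ≤
        ∫ x in Set.Ioi x₀,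
          ((pdX u (x, y)) ^ 2 + (1 + γ) * (u (x, y)) ^ 2) * Real.exp (-γ * |x|) := by
    intro y
    have hline : Continuous fun x : ℝ => ((x, y) : ℝ × ℝ) := continuous_id.prodMk continuous_const
    set F : ℝ → ℝ := fun x => (u (x, y)) ^ 2 * Real.exp (-γ * (x - x₀)) with hF
    set F' : ℝ → ℝ := fun x =>
      (2 * u (x, y) * pdX u (x, y) - γ * (u (x, y)) ^ 2) * Real.exp (-γ * (x - x₀)) with hF'
    set G : ℝ → ℝ := fun x =>
      ((pdX u (x, y)) ^ 2 + (1 + γ) * (u (x, y)) ^ 2) * Real.exp (-γ * (x - x₀)) with hG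
    set H : ℝ → ℝ := fun x =>
      ((pdX u (x, y)) ^ 2 + (1 + γ) * (u (x, y)) ^ 2) * Real.exp (-γ * |x|) with hH
    have hud : ∀ x : ℝ, HasDerivAt (fun x => u (x, y)) (pdX u (x, y)) x := by
      intro x
      have h1 : HasDerivAt (fun x : ℝ => ((x, y) : ℝ × ℝ)) ((1 : ℝ), (0 : ℝ)) x :=
        (hasDerivAt_id x).prodMk (hasDerivAt_const x y)
      exact (hu.differentiable one_ne_zero (x, y)).hasFDerivAt.comp_hasDerivAt x h1
    have hexp : ∀ x : ℝ, HasDerivAt (fun x : ℝ => Real.exp (-γ * (x - x₀)))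
        (-γ * Real.exp (-γ * (x - x₀))) x := by
      intro x
      have h1 : HasDerivAt (fun x : ℝ => -γ * (x - x₀)) (-γ) x := by
        simpa using ((hasDerivAt_id x).sub_const x₀).const_mul (-γ)
      simpa [mul_comm] using h1.exp
    have hFderiv : ∀ x : ℝ, HasDerivAt F (F' x) x := by
      intro x
      have : HasDerivAt (fun x => u (x, y) ^ 2 * Real.exp (-γ * (x - x₀)))
          ((((2:ℕ):ℝ) * u (x, y) ^ (2 - 1) * pdX u (x, y)) * Real.exp (-γ * (x - x₀)) +
            u (x, y) ^ 2 * (-γ * Real.exp (-γ * (x - x₀)))) x := ((hud x).pow 2).mul (hexp x)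
      convert this using 1
      simp only [hF']
      ring
    have hFtend : Tendsto F atTop (nhds 0) := by
      have heq : F =ᶠ[atTop] fun _ => (0 : ℝ) := by
        filter_upwards [Filter.eventually_gt_atTop R] with x hx
        have hzero : u (x, y) = 0 := hu0 _ (hout x y (lt_of_lt_of_le hx (le_abs_self x)))
        simp [hF, hzero]
      exact Tendsto.congr' heq.symm tendsto_const_nhds
    have hcsupport : ∀ f : ℝ → ℝ, (∀ x, R < |x| → f x = 0) → HasCompactSupport f := by
      intro f hf
      exact HasCompactSupport.intro isCompact_Icc (fun x hx => hf x (habs x hx))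
    have hucomp : ∀ x : ℝ, R < |x| → u (x, y) = 0 := fun x hx => hu0 _ (hout x y hx)
    have hpdcomp : ∀ x : ℝ, R < |x| → pdX u (x, y) = 0 := fun x hx => hpdX0 _ (hout x y hx)
    have hF'c : Continuous F' := by
      apply Continuous.mul
      · exact ((continuous_const.mul (hcu.comp hline)).mul (hpdX.comp hline)).sub
          (continuous_const.mul ((hcu.comp hline).pow 2))
      · exact (continuous_const.mul (continuous_id.sub continuous_const)).rexp
    have hF'int : IntegrableOn F' (Set.Ioi x₀) := by
      exact (hF'c.integrable_of_hasCompactSupport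
        (hcsupport _ fun x hx => by simp [hF', hucomp x hx, hpdcomp x hx])).integrableOn
    have hGc : Continuous G := by
      apply Continuous.mul
      · exact ((hpdX.comp hline).pow 2).add (continuous_const.mul ((hcu.comp hline).pow 2))
      · exact (continuous_const.mul (continuous_id.sub continuous_const)).rexp
    have hGint : IntegrableOn G (Set.Ioi x₀) := by
      exact (hGc.integrable_of_hasCompactSupport
        (hcsupport _ fun x hx => by simp [hG, hucomp x hx, hpdcomp x hx])).integrableOn
    have hHc : Continuous H := by
      apply Continuous.mul
      · exact ((hpdX.comp hline).pow 2).add (continuous_const.mul ((hcu.comp hline).pow 2))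
      · exact (continuous_const.mul continuous_abs).rexp
    have hHint : IntegrableOn H (Set.Ioi x₀) := by
      exact (hHc.integrable_of_hasCompactSupport
        (hcsupport _ fun x hx => by simp [hH, hucomp x hx, hpdcomp x hx])).integrableOn
    have hFTC : ∫ x in Set.Ioi x₀, F' x = 0 - F x₀ :=
      integral_Ioi_of_hasDerivAt_of_tendsto' (fun x _ => hFderiv x) hF'int hFtend
    have hFx₀ : F x₀ = (u (x₀, y)) ^ 2 := by simp [hF]
    have h1 : (u (x₀, y)) ^ 2 ≤ ∫ x in Set.Ioi x₀, G x := by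
      have : (u (x₀, y)) ^ 2 = ∫ x in Set.Ioi x₀, -F' x := by
        rw [integral_neg, hFTC, hFx₀]; ring
      rw [this]
      apply setIntegral_mono hF'int.neg hGint
      intro x
      have hexp0 : (0:ℝ) ≤ Real.exp (-γ * (x - x₀)) := (Real.exp_pos _).le
      simp only [hF', hG]
      have : -((2 * u (x, y) * pdX u (x, y) - γ * (u (x, y)) ^ 2)) ≤
          (pdX u (x, y)) ^ 2 + (1 + γ) * (u (x, y)) ^ 2 := by
        nlinarith [sq_nonneg (u (x, y) + pdX u (x, y))]
      calc -((2 * u (x, y) * pdX u (x, y) - γ * (u (x, y)) ^ 2) * Real.exp (-γ * (x - x₀)))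
          = -((2 * u (x, y) * pdX u (x, y) - γ * (u (x, y)) ^ 2)) * Real.exp (-γ * (x - x₀)) := by
            ring
        _ ≤ ((pdX u (x, y)) ^ 2 + (1 + γ) * (u (x, y)) ^ 2) * Real.exp (-γ * (x - x₀)) :=
            mul_le_mul_of_nonneg_right this hexp0
    have h2 : Real.exp (-γ * |x₀|) * ∫ x in Set.Ioi x₀, G x ≤ ∫ x in Set.Ioi x₀, H x := by
      rw [← integral_const_mul]
      apply setIntegral_mono_on (hGint.const_mul _) hHint measurableSet_Ioi
      intro x hx
      rw [Set.mem_Ioi] at hx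
      simp only [hG, hH]
      rw [show Real.exp (-γ * |x₀|) * (((pdX u (x, y)) ^ 2 + (1 + γ) * (u (x, y)) ^ 2) *
          Real.exp (-γ * (x - x₀))) = ((pdX u (x, y)) ^ 2 + (1 + γ) * (u (x, y)) ^ 2) *
          (Real.exp (-γ * |x₀|) * Real.exp (-γ * (x - x₀))) by ring, ← Real.exp_add]
      apply mul_le_mul_of_nonneg_left _ (by positivity)
      apply Real.exp_le_exp.mpr
      have : |x| ≤ |x₀| + (x - x₀) := by
        have h := abs_add_le x₀ (x - x₀)
        have h2' : x₀ + (x - x₀) = x := by ring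
        rw [h2'] at h
        have h3' : |x - x₀| = x - x₀ := abs_of_nonneg (by linarith : (0:ℝ) ≤ x - x₀)
        rw [h3'] at h
        exact h
      nlinarith [hγ.le]
    calc (u (x₀, y)) ^ 2 * Real.exp (-γ * |x₀|)
        = Real.exp (-γ * |x₀|) * (u (x₀, y)) ^ 2 := by ring
      _ ≤ Real.exp (-γ * |x₀|) * ∫ x in Set.Ioi x₀, G x :=
          mul_le_mul_of_nonneg_left h1 (Real.exp_pos _).le
      _ ≤ ∫ x in Set.Ioi x₀, H x := h2
  -- the intermediate integrand
  set g : ℝ × ℝ → ℝ := fun p =>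
    ((pdX u p) ^ 2 + (1 + γ) * (u p) ^ 2) * Real.exp (-γ * |p.1|) *
      (p.2 ^ β * Real.exp (-μ * p.2)) with hg
  set ν : Measure (ℝ × ℝ) :=
    (volume.restrict (Set.Ioi x₀)).prod (volume.restrict (Set.Ioi (0:ℝ))) with hν
  have hprodeq : ν = volume.restrict (Set.Ioi x₀ ×ˢ Set.Ioi (0:ℝ)) := by
    rw [hν, Measure.prod_restrict, ← Measure.volume_eq_prod]
  have hmemν : ∀ᵐ p ∂ν, p ∈ Set.Ioi x₀ ×ˢ Set.Ioi (0:ℝ) := by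
    rw [hprodeq]
    exact ae_restrict_mem (measurableSet_Ioi.prod measurableSet_Ioi)
  have hwint : Integrable (fun y : ℝ => y ^ β * Real.exp (-μ * y))
      (volume.restrict (Set.Ioi (0:ℝ))) := by
    simpa [Real.rpow_one, IntegrableOn] using
      integrableOn_rpow_mul_exp_neg_mul_rpow (by linarith : (-1:ℝ) < β) one_pos hμ
  have hw1int : Integrable (fun y : ℝ => y ^ (β - 1) * Real.exp (-μ * y))
      (volume.restrict (Set.Ioi (0:ℝ))) := by
    simpa [Real.rpow_one, IntegrableOn] using
      integrableOn_rpow_mul_exp_neg_mul_rpow (by linarith : (-1:ℝ) < β - 1) one_pos hμ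
  have hind : ∀ c : ℝ, Integrable ((Set.Icc (-R) R).indicator fun _ => c)
      (volume.restrict (Set.Ioi x₀)) := by
    intro c
    have : Integrable ((Set.Icc (-R) R).indicator fun _ => c) volume := by
      rw [integrable_indicator_iff measurableSet_Icc]
      exact integrableOn_const measure_Icc_lt_top.ne
    exact this.restrict
  have hgc : Continuous g := by
    apply Continuous.mul
    · exact ((hpdX.pow 2).add (continuous_const.mul (hcu.pow 2))).mul
        (continuous_const.mul (continuous_abs.comp continuous_fst)).rexp
    · exact ((Real.continuous_rpow_const hβ.le).comp continuous_snd).mul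
        (continuous_const.mul continuous_snd).rexp
  have hgint : Integrable g ν := by
    apply Integrable.mono'
      (((hind ((1 + γ) * B)).mul_prod hwint))
      (hgc.aestronglyMeasurable)
    filter_upwards [hmemν] with p hp
    obtain ⟨hp1, hp2⟩ := hp
    rw [Set.mem_Ioi] at hp1 hp2
    have hwnn : 0 ≤ p.2 ^ β * Real.exp (-μ * p.2) := by
      apply mul_nonneg (Real.rpow_nonneg hp2.le β) (Real.exp_pos _).le
    have hgnn : 0 ≤ g p := by
      apply mul_nonneg (mul_nonneg (by positivity) (Real.exp_pos _).le) hwnn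
    rw [Real.norm_eq_abs, abs_of_nonneg hgnn]
    by_cases hmem : p.1 ∈ Set.Icc (-R) R
    · rw [Set.indicator_of_mem hmem]
      have h1 : (pdX u p) ^ 2 + (1 + γ) * (u p) ^ 2 ≤ (1 + γ) * B := hBg p
      have h2 : Real.exp (-γ * |p.1|) ≤ 1 := Real.exp_le_one_iff.mpr
        (by nlinarith [abs_nonneg p.1, hγ.le])
      calc g p ≤ ((1 + γ) * B * 1) * (p.2 ^ β * Real.exp (-μ * p.2)) := by
            apply mul_le_mul_of_nonneg_right _ hwnn
            exact mul_le_mul h1 h2 (Real.exp_pos _).le (by positivity)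
        _ = (1 + γ) * B * (p.2 ^ β * Real.exp (-μ * p.2)) := by ring
    · rw [Set.indicator_of_notMem hmem]
      have hR' : R < |p.1| := habs _ hmem
      have hp0 : ((p.1, p.2) : ℝ × ℝ) ∉ tsupport u := hout p.1 p.2 hR'
      have : u p = 0 := hu0 _ hp0
      have h2 : pdX u p = 0 := hpdX0 _ hp0
      simp [hg, this, h2]
  -- claim 1 : LHS bounded by iterated integral of g
  have claim1 : (∫ y in Set.Ioi (0:ℝ),
        (u (x₀, y)) ^ 2 * y ^ β * Real.exp (-γ * |x₀| - μ * y))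
      ≤ ∫ y in Set.Ioi (0:ℝ), ∫ x in Set.Ioi x₀, g (x, y) := by
    apply integral_mono_of_nonneg
    · filter_upwards [ae_restrict_mem measurableSet_Ioi] with y hy
      rw [Set.mem_Ioi] at hy
      have := Real.rpow_nonneg hy.le β
      positivity
    · exact hgint.integral_prod_right
    · filter_upwards [ae_restrict_mem measurableSet_Ioi] with y hy
      rw [Set.mem_Ioi] at hy
      have h0 : 0 ≤ y ^ β * Real.exp (-μ * y) :=
        mul_nonneg (Real.rpow_nonneg hy.le β) (Real.exp_pos _).le
      have key := mul_le_mul_of_nonneg_right (stepA y) h0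
      calc (u (x₀, y)) ^ 2 * y ^ β * Real.exp (-γ * |x₀| - μ * y)
          = (u (x₀, y)) ^ 2 * Real.exp (-γ * |x₀|) * (y ^ β * Real.exp (-μ * y)) := by
            rw [show -γ * |x₀| - μ * y = (-γ * |x₀|) + (-μ * y) by ring, Real.exp_add]
            ring
        _ ≤ (∫ x in Set.Ioi x₀,
              ((pdX u (x, y)) ^ 2 + (1 + γ) * (u (x, y)) ^ 2) * Real.exp (-γ * |x|)) *
              (y ^ β * Real.exp (-μ * y)) := key
        _ = ∫ x in Set.Ioi x₀, g (x, y) := by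
            rw [← integral_mul_const]
  -- claim 2 : iterated integral equals the double integral
  have claim2 : (∫ p in Set.Ioi x₀ ×ˢ Set.Ioi (0:ℝ), g p)
      = ∫ y in Set.Ioi (0:ℝ), ∫ x in Set.Ioi x₀, g (x, y) := by
    calc (∫ p in Set.Ioi x₀ ×ˢ Set.Ioi (0:ℝ), g p) = ∫ p, g p ∂ν := by rw [hprodeq]
      _ = ∫ x in Set.Ioi x₀, ∫ y in Set.Ioi (0:ℝ), g (x, y) :=
          MeasureTheory.integral_prod g hgint
      _ = ∫ y in Set.Ioi (0:ℝ), ∫ x in Set.Ioi x₀, g (x, y) :=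
          integral_integral_swap hgint
  -- integrability of the right-hand side integrand
  set big : ℝ × ℝ → ℝ := fun p =>
    (p.2 * ((pdX u p) ^ 2 + (pdY u p) ^ 2) + (1 + p.2) * (u p) ^ 2) * hw β γ μ p with hbig
  have hbigmeas : AEStronglyMeasurable big
      (volume.restrict (Set.Ioi x₀ ×ˢ Set.Ioi (0:ℝ))) := by
    apply ContinuousOn.aestronglyMeasurable _ (measurableSet_Ioi.prod measurableSet_Ioi)
    intro p hp
    have hy : (0:ℝ) < p.2 := hp.2
    apply ContinuousWithinAt.mul
    · exact (((continuous_snd.mul ((hpdX.pow 2).add (hpdY.pow 2))).add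
        ((continuous_const.add continuous_snd).mul (hcu.pow 2))).continuousAt).continuousWithinAt
    · apply ContinuousWithinAt.mul
      · exact (ContinuousAt.comp
          (Real.continuousAt_rpow_const p.2 (β - 1) (Or.inl hy.ne'))
          continuous_snd.continuousAt).continuousWithinAt
      · exact ((continuous_const.mul (continuous_abs.comp continuous_fst)).sub
          (continuous_const.mul continuous_snd)).rexp.continuousAt.continuousWithinAt
  have hbigint : IntegrableOn big (Set.Ioi x₀ ×ˢ Set.Ioi (0:ℝ)) := by
    have hbm2 : AEStronglyMeasurable big ν := by
      rw [hprodeq]; exact hbigmeas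
    have hmain : Integrable big ν := by
      apply Integrable.mono'
        ((hind B).mul_prod ((hwint.const_mul 2).add hw1int)) hbm2
      filter_upwards [hmemν] with p hp
      obtain ⟨hp1, hp2⟩ := hp
      rw [Set.mem_Ioi] at hp1 hp2
      have hy := hp2
      have hynn := hy.le
      have hrnn : 0 ≤ p.2 ^ (β - 1) := Real.rpow_nonneg hynn _
      have hbignn : 0 ≤ big p := by
        apply mul_nonneg
        · positivity
        · exact mul_nonneg hrnn (Real.exp_pos _).le
      rw [Real.norm_eq_abs, abs_of_nonneg hbignn]
      have hyb : p.2 ^ β = p.2 ^ (β - 1) * p.2 := by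
        rw [show β = β - 1 + 1 by ring, Real.rpow_add_one hy.ne']
        ring_nf
      by_cases hmem : p.1 ∈ Set.Icc (-R) R
      · rw [Set.indicator_of_mem hmem]
        have hsplit : Real.exp (-γ * |p.1| - μ * p.2) =
            Real.exp (-γ * |p.1|) * Real.exp (-μ * p.2) := by
          rw [show -γ * |p.1| - μ * p.2 = (-γ * |p.1|) + (-μ * p.2) by ring, Real.exp_add]
        have hpe1 : Real.exp (-γ * |p.1|) ≤ 1 := Real.exp_le_one_iff.mpr
          (by nlinarith [abs_nonneg p.1, hγ.le])
        have hf1 : p.2 * ((pdX u p) ^ 2 + (pdY u p) ^ 2) + (1 + p.2) * (u p) ^ 2 ≤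
            p.2 * B + (1 + p.2) * B := by
          have h1 := hBD p
          have h2 := hBU p
          nlinarith [hy.le]
        have e2nn : (0:ℝ) ≤ Real.exp (-μ * p.2) := (Real.exp_pos _).le
        have key : big p ≤ (p.2 * B + (1 + p.2) * B) *
            (p.2 ^ (β - 1) * Real.exp (-μ * p.2)) := by
          simp only [hbig, hw, hsplit]
          calc (p.2 * ((pdX u p) ^ 2 + (pdY u p) ^ 2) + (1 + p.2) * (u p) ^ 2) *
                (p.2 ^ (β - 1) * (Real.exp (-γ * |p.1|) * Real.exp (-μ * p.2)))
              ≤ (p.2 * B + (1 + p.2) * B) *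
                (p.2 ^ (β - 1) * (1 * Real.exp (-μ * p.2))) := by
                apply mul_le_mul hf1
                · apply mul_le_mul_of_nonneg_left _ hrnn
                  exact mul_le_mul_of_nonneg_right hpe1 e2nn
                · exact mul_nonneg hrnn (mul_nonneg (Real.exp_pos _).le e2nn)
                · nlinarith [hy.le, hB0]
            _ = (p.2 * B + (1 + p.2) * B) * (p.2 ^ (β - 1) * Real.exp (-μ * p.2)) := by
                ring
        have expand : (p.2 * B + (1 + p.2) * B) * (p.2 ^ (β - 1) * Real.exp (-μ * p.2)) =
            B * (2 * (p.2 ^ β * Real.exp (-μ * p.2)) +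
              p.2 ^ (β - 1) * Real.exp (-μ * p.2)) := by
          rw [hyb]; ring
        exact expand ▸ key
      · rw [Set.indicator_of_notMem hmem]
        have hR' : R < |p.1| := habs _ hmem
        have hp0 : ((p.1, p.2) : ℝ × ℝ) ∉ tsupport u := hout p.1 p.2 hR'
        have h1 : u p = 0 := hu0 _ hp0
        have h2 : pdX u p = 0 := hpdX0 _ hp0
        have h3 : pdY u p = 0 := hpdY0 _ hp0
        simp [hbig, h1, h2, h3]
    rw [IntegrableOn, ← hprodeq]
    exact hmain
  -- claim 3 : the double integral of g is bounded by the weighted energy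
  have claim3 : (∫ p in Set.Ioi x₀ ×ˢ Set.Ioi (0:ℝ), g p)
      ≤ (1 + γ) * ∫ p in Set.Ioi x₀ ×ˢ Set.Ioi (0:ℝ), big p := by
    have hgOn : IntegrableOn g (Set.Ioi x₀ ×ˢ Set.Ioi (0:ℝ)) := by
      rw [IntegrableOn, ← hprodeq]
      exact hgint
    rw [← integral_const_mul]
    apply setIntegral_mono_on hgOn (hbigint.const_mul _)
      (measurableSet_Ioi.prod measurableSet_Ioi)
    intro p hp
    obtain ⟨hp1, hp2⟩ := hp
    rw [Set.mem_Ioi] at hp1 hp2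
    have hy := hp2
    have hyb : p.2 ^ β = p.2 ^ (β - 1) * p.2 := by
      rw [show β = β - 1 + 1 by ring, Real.rpow_add_one hy.ne']
      ring_nf
    have hsplit : Real.exp (-γ * |p.1| - μ * p.2) =
        Real.exp (-γ * |p.1|) * Real.exp (-μ * p.2) := by
      rw [show -γ * |p.1| - μ * p.2 = (-γ * |p.1|) + (-μ * p.2) by ring, Real.exp_add]
    simp only [hg, hbig, hw, hsplit, hyb]
    have hkey : ((pdX u p) ^ 2 + (1 + γ) * (u p) ^ 2) * p.2 ≤
        (1 + γ) * (p.2 * ((pdX u p) ^ 2 + (pdY u p) ^ 2) + (1 + p.2) * (u p) ^ 2) := by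
      nlinarith [mul_nonneg (mul_nonneg hγ.le hy.le) (sq_nonneg (pdX u p)),
        mul_nonneg (mul_nonneg hγ.le hy.le) (sq_nonneg (pdY u p)),
        mul_nonneg hy.le (sq_nonneg (pdY u p)),
        mul_nonneg hγ.le (sq_nonneg (u p)), sq_nonneg (u p)]
    have hq : 0 ≤ p.2 ^ (β - 1) * (Real.exp (-γ * |p.1|) * Real.exp (-μ * p.2)) := by
      apply mul_nonneg (Real.rpow_nonneg hy.le _) (by positivity)
    calc ((pdX u p) ^ 2 + (1 + γ) * (u p) ^ 2) * Real.exp (-γ * |p.1|) *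
          (p.2 ^ (β - 1) * p.2 * Real.exp (-μ * p.2))
        = (((pdX u p) ^ 2 + (1 + γ) * (u p) ^ 2) * p.2) *
          (p.2 ^ (β - 1) * (Real.exp (-γ * |p.1|) * Real.exp (-μ * p.2))) := by ring
      _ ≤ ((1 + γ) * (p.2 * ((pdX u p) ^ 2 + (pdY u p) ^ 2) + (1 + p.2) * (u p) ^ 2)) *
          (p.2 ^ (β - 1) * (Real.exp (-γ * |p.1|) * Real.exp (-μ * p.2))) :=
          mul_le_mul_of_nonneg_right hkey hq
      _ = (1 + γ) * ((p.2 * ((pdX u p) ^ 2 + (pdY u p) ^ 2) + (1 + p.2) * (u p) ^ 2) *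
          (p.2 ^ (β - 1) * (Real.exp (-γ * |p.1|) * Real.exp (-μ * p.2)))) := by ring
  calc (∫ y in Set.Ioi (0:ℝ), (u (x₀, y)) ^ 2 * y ^ β * Real.exp (-γ * |x₀| - μ * y))
      ≤ ∫ y in Set.Ioi (0:ℝ), ∫ x in Set.Ioi x₀, g (x, y) := claim1
    _ = ∫ p in Set.Ioi x₀ ×ˢ Set.Ioi (0:ℝ), g p := claim2.symm
    _ ≤ (1 + γ) * ∫ p in Set.Ioi x₀ ×ˢ Set.Ioi (0:ℝ), big p := claim3
end
end

section
/- Let 0 < β < 1 and γ, μ > 0, let x₀ ∈ ℝ, and let O := (x₀,∞) × (0,∞). There exists a constant C > 0, depending only on μ, such that for every u ∈ C¹(ℝ²) with compact support: ∫_{x₀}^∞ u(x,0)² e^{−γ|x|} dx ≤ C ∫_O ( |Du|² + u² ) 𝔴 dx dy, where |Du|² = u_x² + u_y². -/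
open MeasureTheory Real Filter Topology

noncomputable section

lemma exp_neg_le_rpow {β y : ℝ} (hβ0 : 0 < β) (hβ1 : β < 1) (hy : 0 < y) :
    Real.exp (-y) ≤ y ^ (β - 1) := by
  rcases le_or_gt y 1 with h | h
  · have h1 : Real.exp (-y) ≤ 1 := by
      rw [← Real.exp_zero]; exact Real.exp_le_exp.mpr (by linarith)
    have h2 : (1:ℝ) ≤ y ^ (β - 1) :=
      Real.one_le_rpow_of_pos_of_le_one_of_nonpos hy h (by linarith)
    linarith
  · have h1 : y ^ (-1 : ℝ) ≤ y ^ (β - 1) :=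
      Real.rpow_le_rpow_of_exponent_le h.le (by linarith)
    have h2 : Real.exp (-y) ≤ y ^ (-1 : ℝ) := by
      rw [Real.rpow_neg_one, Real.exp_neg]
      have hye : y ≤ Real.exp y := by linarith [Real.add_one_le_exp y]
      exact inv_anti₀ hy hye
    linarith

lemma hcs_mono {α : Type*} [TopologicalSpace α] [T2Space α] {f g : α → ℝ}
    (hf : HasCompactSupport f) (h : ∀ x, g x ≠ 0 → f x ≠ 0) : HasCompactSupport g := by
  refine IsCompact.of_isClosed_subset hf isClosed_closure
    (closure_minimal ?_ hf.isClosed)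
  intro x hx
  exact subset_tsupport f (h x hx)

lemma hcs_slice_snd {f : ℝ × ℝ → ℝ} (hf : HasCompactSupport f) (x : ℝ) :
    HasCompactSupport fun y => f (x, y) := by
  have himg : IsCompact (Prod.snd '' tsupport f) := hf.image continuous_snd
  refine IsCompact.of_isClosed_subset himg isClosed_closure
    (closure_minimal ?_ himg.isClosed)
  intro y hy
  exact ⟨(x, y), subset_tsupport f hy, rfl⟩

lemma hcs_slice_fst {f : ℝ × ℝ → ℝ} (hf : HasCompactSupport f) (y : ℝ) :
    HasCompactSupport fun x => f (x, y) := by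
  have himg : IsCompact (Prod.fst '' tsupport f) := hf.image continuous_fst
  refine IsCompact.of_isClosed_subset himg isClosed_closure
    (closure_minimal ?_ himg.isClosed)
  intro x hx
  exact ⟨(x, y), subset_tsupport f hx, rfl⟩

/-- Γ₀-boundary trace estimate on the quadrant O = (x₀,∞) × (0,∞)
when 0 < β < 1; the constant C depends only on μ. -/
theorem stmt12 :
    ∀ μ : ℝ, 0 < μ → ∃ C : ℝ, 0 < C ∧
      ∀ β : ℝ, 0 < β → β < 1 → ∀ γ : ℝ, 0 < γ → ∀ x₀ : ℝ,
        ∀ u : ℝ × ℝ → ℝ, ContDiff ℝ 1 u → HasCompactSupport u →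
          (∫ x in Set.Ioi x₀, (u (x, 0)) ^ 2 * Real.exp (-γ * |x|))
            ≤ C * ∫ p in Set.Ioi x₀ ×ˢ Set.Ioi (0 : ℝ),
                (((pdX u p) ^ 2 + (pdY u p) ^ 2) + (u p) ^ 2) * hw β γ μ p := by
  intro μ hμ
  refine ⟨μ + 2, by linarith, ?_⟩
  intro β hβ0 hβ1 γ hγ x₀ u hu hsupp
  -- continuity facts
  have hfd : Continuous (fderiv ℝ u) := hu.continuous_fderiv one_ne_zero
  have hpdX : Continuous (pdX u) := hfd.clm_apply continuous_const
  have hpdY : Continuous (pdY u) := hfd.clm_apply continuous_const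
  have huc : Continuous u := hu.continuous
  have hGc : Continuous (fun p : ℝ × ℝ => ((pdX u p) ^ 2 + (pdY u p) ^ 2) + (u p) ^ 2) :=
    ((hpdX.pow 2).add (hpdY.pow 2)).add (huc.pow 2)
  -- compact support of G
  have hX : HasCompactSupport (fun p : ℝ × ℝ => (pdX u p) ^ 2) := by
    refine hcs_mono (hsupp.fderiv_apply ℝ (1, 0)) fun p hp => ?_
    intro h0
    exact hp (by simp [pdX] at h0 ⊢; simp [h0])
  have hY : HasCompactSupport (fun p : ℝ × ℝ => (pdY u p) ^ 2) := by
    refine hcs_mono (hsupp.fderiv_apply ℝ (0, 1)) fun p hp => ?_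
    intro h0
    exact hp (by simp [pdY] at h0 ⊢; simp [h0])
  have hU : HasCompactSupport (fun p : ℝ × ℝ => (u p) ^ 2) := by
    refine hcs_mono hsupp fun p hp => ?_
    intro h0
    exact hp (by simp [h0])
  have hGcs : HasCompactSupport (fun p : ℝ × ℝ => ((pdX u p) ^ 2 + (pdY u p) ^ 2) + (u p) ^ 2) :=
    (hX.add hY).add hU
  have hGnn : ∀ p : ℝ × ℝ, 0 ≤ ((pdX u p) ^ 2 + (pdY u p) ^ 2) + (u p) ^ 2 := fun p => by
    positivity
  obtain ⟨M, hM⟩ := hGcs.exists_bound_of_continuous hGc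
  have hGM : ∀ p : ℝ × ℝ, ((pdX u p) ^ 2 + (pdY u p) ^ 2) + (u p) ^ 2 ≤ M := fun p =>
    (le_abs_self _).trans (by simpa [Real.norm_eq_abs] using hM p)
  -- base integrable functions
  have hgbase : IntegrableOn (fun y : ℝ => y ^ (β - 1) * Real.exp (-μ * y)) (Set.Ioi 0) := by
    have h := integrableOn_rpow_mul_exp_neg_mul_rpow
      (by linarith : (-1:ℝ) < β - 1) zero_lt_one hμ
    simpa [Real.rpow_one] using h
  have hfx : IntegrableOn (fun x : ℝ => Real.exp (-γ * |x|)) (Set.Ioi x₀) := by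
    refine Integrable.mono' (exp_neg_integrableOn_Ioi x₀ hγ) ?_ ?_
    · exact (Real.continuous_exp.comp (show Continuous fun x : ℝ => -γ * |x| from continuous_const.mul continuous_abs)).aestronglyMeasurable
    · filter_upwards with x
      rw [Real.norm_eq_abs, abs_of_nonneg (Real.exp_pos _).le]
      exact Real.exp_le_exp.mpr (by nlinarith [le_abs_self x, hγ.le])
  have hweq : ∀ x y : ℝ, hw β γ μ (x, y)
      = Real.exp (-γ * |x|) * (y ^ (β - 1) * Real.exp (-μ * y)) := by
    intro x y
    simp only [hw, sub_eq_add_neg, Real.exp_add, neg_mul]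
    ring
  -- integrability of the full RHS integrand on the product, w.r.t. the product measure
  have hWprod : Integrable (fun p : ℝ × ℝ =>
      Real.exp (-γ * |p.1|) * (p.2 ^ (β - 1) * Real.exp (-μ * p.2)))
      ((volume.restrict (Set.Ioi x₀)).prod (volume.restrict (Set.Ioi (0:ℝ)))) :=
    hfx.mul_prod hgbase
  have hFprod : Integrable (fun p : ℝ × ℝ =>
      (((pdX u p) ^ 2 + (pdY u p) ^ 2) + (u p) ^ 2) * hw β γ μ p)
      ((volume.restrict (Set.Ioi x₀)).prod (volume.restrict (Set.Ioi (0:ℝ)))) := by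
    refine Integrable.mono' (hWprod.const_mul M) ?_ ?_
    · refine AEStronglyMeasurable.mul hGc.aestronglyMeasurable ?_
      refine Measurable.aestronglyMeasurable ?_
      exact (measurable_snd.pow measurable_const).mul
        (((measurable_fst.abs.const_mul (-γ)).sub (measurable_snd.const_mul μ)).exp)
    · rw [Measure.prod_restrict]
      filter_upwards [ae_restrict_mem (measurableSet_Ioi.prod measurableSet_Ioi)] with p hp
      have hp2 : (0:ℝ) < p.2 := hp.2
      have hwnn : 0 ≤ hw β γ μ p := by
        have := hweq p.1 p.2
        simp only [Prod.mk.eta] at this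
        rw [this]
        exact mul_nonneg (Real.exp_pos _).le
          (mul_nonneg (Real.rpow_nonneg hp2.le _) (Real.exp_pos _).le)
      rw [Real.norm_eq_abs, abs_mul, abs_of_nonneg (hGnn p), abs_of_nonneg hwnn]
      have h1 : hw β γ μ p = Real.exp (-γ * |p.1|) * (p.2 ^ (β - 1) * Real.exp (-μ * p.2)) := by
        have := hweq p.1 p.2; simpa using this
      rw [h1]
      exact mul_le_mul_of_nonneg_right (hGM p)
        (by rw [← h1]; exact h1 ▸ hwnn)
  -- the key pointwise-in-x estimate
  have key : ∀ x : ℝ, u (x, 0) ^ 2 * Real.exp (-γ * |x|)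
      ≤ (μ + 2) * ∫ y in Set.Ioi (0:ℝ),
          (((pdX u (x, y)) ^ 2 + (pdY u (x, y)) ^ 2) + (u (x, y)) ^ 2) * hw β γ μ (x, y) := by
    intro x
    -- derivative of the slice
    have hvd : ∀ y : ℝ, HasDerivAt (fun y => u (x, y)) (pdY u (x, y)) y := by
      intro y
      have h1 : HasDerivAt (fun y : ℝ => ((x : ℝ), y)) ((0 : ℝ), (1 : ℝ)) y :=
        HasDerivAt.prodMk (hasDerivAt_const y x) (hasDerivAt_id y)
      have h2 := (hu.differentiable one_ne_zero (x, y)).hasFDerivAt.comp_hasDerivAt y h1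
      simpa [Function.comp_def, pdY] using h2
    have hD : ∀ y : ℝ, HasDerivAt (fun y => u (x, y) ^ 2 * Real.exp (-((μ+1) * y)))
        (2 * u (x, y) * pdY u (x, y) * Real.exp (-((μ+1) * y))
          + u (x, y) ^ 2 * (Real.exp (-((μ+1) * y)) * -(μ+1))) y := by
      intro y
      have h1 : HasDerivAt (fun y : ℝ => u (x, y) ^ 2) (2 * u (x, y) * pdY u (x, y)) y := by
        have h := (hvd y).fun_pow 2
        simpa [mul_comm, mul_assoc, mul_left_comm] using h
      have h2 : HasDerivAt (fun y : ℝ => -((μ+1) * y)) (-(μ+1)) y := by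
        simpa using ((hasDerivAt_id y).const_mul (μ+1)).fun_neg
      exact h1.mul h2.exp
    have hvcs : HasCompactSupport (fun y => u (x, y)) := hcs_slice_snd hsupp x
    have hDcont : Continuous (fun y : ℝ =>
        2 * u (x, y) * pdY u (x, y) * Real.exp (-((μ+1) * y))
          + u (x, y) ^ 2 * (Real.exp (-((μ+1) * y)) * -(μ+1))) := by
      have hmk : Continuous (fun y : ℝ => ((x : ℝ), y)) := continuous_const.prodMk continuous_id
      have hvc : Continuous (fun y : ℝ => u (x, y)) := huc.comp hmk
      have hpc : Continuous (fun y : ℝ => pdY u (x, y)) := hpdY.comp hmk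
      have hec : Continuous (fun y : ℝ => Real.exp (-((μ+1) * y))) :=
        Real.continuous_exp.comp (show Continuous fun y : ℝ => -((μ+1) * y) from (continuous_const.mul continuous_id).neg)
      exact ((((continuous_const.mul hvc).mul hpc).mul hec).add
        ((hvc.pow 2).mul (hec.mul continuous_const)))
    have hDcs : HasCompactSupport (fun y : ℝ =>
        2 * u (x, y) * pdY u (x, y) * Real.exp (-((μ+1) * y))
          + u (x, y) ^ 2 * (Real.exp (-((μ+1) * y)) * -(μ+1))) := by
      refine hcs_mono hvcs fun y hy => ?_
      intro h0
      exact hy (by simp [h0])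
    have hDint : IntegrableOn (fun y : ℝ =>
        2 * u (x, y) * pdY u (x, y) * Real.exp (-((μ+1) * y))
          + u (x, y) ^ 2 * (Real.exp (-((μ+1) * y)) * -(μ+1))) (Set.Ioi 0) :=
      (hDcont.integrable_of_hasCompactSupport hDcs).integrableOn
    have htend : Tendsto (fun y => u (x, y) ^ 2 * Real.exp (-((μ+1) * y))) atTop (𝓝 0) := by
      have h2 : (tsupport fun y => u (x, y))ᶜ ∈ Filter.cocompact ℝ :=
        hvcs.compl_mem_cocompact
      rw [cocompact_eq_atBot_atTop, Filter.mem_sup] at h2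
      have h1 : ∀ᶠ y in atTop, u (x, y) ^ 2 * Real.exp (-((μ+1) * y)) = 0 := by
        filter_upwards [h2.2] with y hy
        have hy' : y ∉ tsupport fun y => u (x, y) := hy
        have : (fun y => u (x, y)) y = 0 :=
          image_eq_zero_of_notMem_tsupport (f := fun y => u (x, y)) hy'
        simp only at this
        simp [this]
      exact Tendsto.congr' (h1.mono fun y hy => hy.symm) tendsto_const_nhds
    have hFTC := integral_Ioi_of_hasDerivAt_of_tendsto' (a := 0)
      (fun y _ => hD y) hDint htend
    have h4 : ∫ y in Set.Ioi (0:ℝ),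
        -(2 * u (x, y) * pdY u (x, y) * Real.exp (-((μ+1) * y))
          + u (x, y) ^ 2 * (Real.exp (-((μ+1) * y)) * -(μ+1))) = u (x, 0) ^ 2 := by
      rw [integral_neg, hFTC]
      simp
    have h5 : ∫ y in Set.Ioi (0:ℝ),
        -(2 * u (x, y) * pdY u (x, y) * Real.exp (-((μ+1) * y))
          + u (x, y) ^ 2 * (Real.exp (-((μ+1) * y)) * -(μ+1)))
        ≤ ∫ y in Set.Ioi (0:ℝ), (μ + 2) *
            ((((pdX u (x, y)) ^ 2 + (pdY u (x, y)) ^ 2) + (u (x, y)) ^ 2)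
              * (y ^ (β - 1) * Real.exp (-μ * y))) := by
      have hmk : Continuous (fun y : ℝ => ((x : ℝ), y)) := continuous_const.prodMk continuous_id
      have hDcs' : HasCompactSupport (fun y : ℝ =>
          -(2 * u (x, y) * pdY u (x, y) * Real.exp (-((μ+1) * y))
            + u (x, y) ^ 2 * (Real.exp (-((μ+1) * y)) * -(μ+1)))) := by
        refine hcs_mono hvcs fun y hy => ?_
        intro h0
        exact hy (by simp [h0])
      refine setIntegral_mono_on
        ((hDcont.neg.integrable_of_hasCompactSupport hDcs').integrableOn) ?_
        measurableSet_Ioi ?_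
      · refine Integrable.mono' ((hgbase.const_mul ((μ + 2) * M))) ?_ ?_
        · refine AEStronglyMeasurable.const_mul ?_ _
          refine AEStronglyMeasurable.mul (Continuous.aestronglyMeasurable ?_) ?_
          · exact hGc.comp hmk
          · exact Measurable.aestronglyMeasurable
              ((measurable_id.pow measurable_const).mul
                ((measurable_id.const_mul (-μ)).exp))
        · filter_upwards [ae_restrict_mem measurableSet_Ioi] with y hy
          have hy0 : (0:ℝ) < y := hy
          have hbnn : (0:ℝ) ≤ y ^ (β - 1) * Real.exp (-μ * y) :=
            mul_nonneg (Real.rpow_nonneg hy0.le _) (Real.exp_pos _).le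
          have hGp := hGM (x, y)
          have hGp0 := hGnn (x, y)
          rw [Real.norm_eq_abs, abs_of_nonneg (by positivity)]
          have hstep : (((pdX u (x, y)) ^ 2 + (pdY u (x, y)) ^ 2) + (u (x, y)) ^ 2)
              * (y ^ (β - 1) * Real.exp (-μ * y))
              ≤ M * (y ^ (β - 1) * Real.exp (-μ * y)) :=
            mul_le_mul_of_nonneg_right hGp hbnn
          calc (μ + 2) * ((((pdX u (x, y)) ^ 2 + (pdY u (x, y)) ^ 2) + (u (x, y)) ^ 2)
                * (y ^ (β - 1) * Real.exp (-μ * y)))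
              ≤ (μ + 2) * (M * (y ^ (β - 1) * Real.exp (-μ * y))) :=
                mul_le_mul_of_nonneg_left hstep (by linarith)
            _ = (μ + 2) * M * (y ^ (β - 1) * Real.exp (-μ * y)) := by ring
      · intro y hy
        have hy0 : (0:ℝ) < y := hy
        have he : Real.exp (-((μ+1) * y)) = Real.exp (-y) * Real.exp (-μ * y) := by
          rw [← Real.exp_add]; ring_nf
        have hbound : Real.exp (-y) ≤ y ^ (β - 1) := exp_neg_le_rpow hβ0 hβ1 hy0
        set A := u (x, y) with hA
        set Ax := pdX u (x, y) with hAx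
        set Ay := pdY u (x, y) with hAy
        have hepos : (0:ℝ) < Real.exp (-((μ+1) * y)) := Real.exp_pos _
        have c1 : (μ+1) * A ^ 2 - 2 * A * Ay ≤ (μ + 2) * ((Ax ^ 2 + Ay ^ 2) + A ^ 2) := by
          nlinarith [sq_nonneg (A + Ay), sq_nonneg Ax, sq_nonneg Ay, sq_nonneg A,
            mul_nonneg hμ.le (sq_nonneg Ax), mul_nonneg hμ.le (sq_nonneg Ay)]
        have step1 : -(2 * A * Ay * Real.exp (-((μ+1) * y))
              + A ^ 2 * (Real.exp (-((μ+1) * y)) * -(μ+1)))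
            ≤ ((μ + 2) * ((Ax ^ 2 + Ay ^ 2) + A ^ 2)) * Real.exp (-((μ+1) * y)) := by
          have : -(2 * A * Ay * Real.exp (-((μ+1) * y))
              + A ^ 2 * (Real.exp (-((μ+1) * y)) * -(μ+1)))
              = ((μ+1) * A ^ 2 - 2 * A * Ay) * Real.exp (-((μ+1) * y)) := by ring
          rw [this]
          exact mul_le_mul_of_nonneg_right c1 hepos.le
        have hGnn' : (0:ℝ) ≤ (Ax ^ 2 + Ay ^ 2) + A ^ 2 := by positivity
        have step2 : ((μ + 2) * ((Ax ^ 2 + Ay ^ 2) + A ^ 2)) * Real.exp (-((μ+1) * y))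
            ≤ (μ + 2) * (((Ax ^ 2 + Ay ^ 2) + A ^ 2) * (y ^ (β - 1) * Real.exp (-μ * y))) := by
          rw [he, show ((μ + 2) * ((Ax ^ 2 + Ay ^ 2) + A ^ 2))
                * (Real.exp (-y) * Real.exp (-μ * y))
              = ((μ + 2) * ((Ax ^ 2 + Ay ^ 2) + A ^ 2) * Real.exp (-μ * y)) * Real.exp (-y)
              from by ring,
            show (μ + 2) * (((Ax ^ 2 + Ay ^ 2) + A ^ 2) * (y ^ (β - 1) * Real.exp (-μ * y)))
              = ((μ + 2) * ((Ax ^ 2 + Ay ^ 2) + A ^ 2) * Real.exp (-μ * y)) * y ^ (β - 1)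
              from by ring]
          refine mul_le_mul_of_nonneg_left hbound ?_
          exact mul_nonneg (mul_nonneg (by linarith) hGnn') (Real.exp_pos _).le
        linarith
    -- combine: u (x,0)^2 ≤ ∫ Q
    have h6 : u (x, 0) ^ 2 ≤ (μ + 2) * ∫ y in Set.Ioi (0:ℝ),
        (((pdX u (x, y)) ^ 2 + (pdY u (x, y)) ^ 2) + (u (x, y)) ^ 2)
          * (y ^ (β - 1) * Real.exp (-μ * y)) := by
      rw [← integral_const_mul]
      calc u (x, 0) ^ 2 = _ := h4.symm
        _ ≤ _ := h5
    have hexnn : (0:ℝ) ≤ Real.exp (-γ * |x|) := (Real.exp_pos _).le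
    have h7 := mul_le_mul_of_nonneg_right h6 hexnn
    refine h7.trans (le_of_eq ?_)
    rw [mul_assoc]
    congr 1
    rw [mul_comm _ (Real.exp (-γ * |x|)), ← integral_const_mul]
    refine integral_congr_ae (ae_of_all _ fun y => ?_)
    simp only [hweq]
    ring
  -- assemble over x
  have hLHSint : IntegrableOn (fun x => u (x, 0) ^ 2 * Real.exp (-γ * |x|)) (Set.Ioi x₀) := by
    have hc : Continuous (fun x => u (x, 0) ^ 2 * Real.exp (-γ * |x|)) := by
      have hmk : Continuous (fun x : ℝ => (x, (0:ℝ))) := continuous_id.prodMk continuous_const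
      exact ((huc.comp hmk).pow 2).mul
        (Real.continuous_exp.comp (show Continuous fun x : ℝ => -γ * |x| from continuous_const.mul continuous_abs))
    have hcs : HasCompactSupport (fun x => u (x, 0) ^ 2 * Real.exp (-γ * |x|)) := by
      refine hcs_mono (hcs_slice_fst hsupp 0) fun x hx => ?_
      intro h0
      exact hx (by simp [h0])
    exact (hc.integrable_of_hasCompactSupport hcs).integrableOn
  have hRHSpt : Integrable (fun x => ∫ y in Set.Ioi (0:ℝ),
      (((pdX u (x, y)) ^ 2 + (pdY u (x, y)) ^ 2) + (u (x, y)) ^ 2) * hw β γ μ (x, y))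
      (volume.restrict (Set.Ioi x₀)) := hFprod.integral_prod_left
  calc (∫ x in Set.Ioi x₀, (u (x, 0)) ^ 2 * Real.exp (-γ * |x|))
      ≤ ∫ x in Set.Ioi x₀, (μ + 2) * ∫ y in Set.Ioi (0:ℝ),
          (((pdX u (x, y)) ^ 2 + (pdY u (x, y)) ^ 2) + (u (x, y)) ^ 2) * hw β γ μ (x, y) :=
        setIntegral_mono_on hLHSint (hRHSpt.const_mul (μ + 2)) measurableSet_Ioi
          (fun x _ => key x)
    _ = (μ + 2) * ∫ x in Set.Ioi x₀, ∫ y in Set.Ioi (0:ℝ),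
          (((pdX u (x, y)) ^ 2 + (pdY u (x, y)) ^ 2) + (u (x, y)) ^ 2) * hw β γ μ (x, y) :=
        integral_const_mul _ _
    _ = (μ + 2) * ∫ p in Set.Ioi x₀ ×ˢ Set.Ioi (0 : ℝ),
          (((pdX u p) ^ 2 + (pdY u p) ^ 2) + (u p) ^ 2) * hw β γ μ p := by
        congr 1
        rw [Measure.volume_eq_prod, setIntegral_prod _ (by rwa [Measure.prod_restrict] at hFprod)]
end
end

section
/- Let 0 < β < 1 and γ, μ > 0. There exists a constant C > 0, depending only on β and μ, such that for every u ∈ C¹(ℝ²) with compact support satisfying u(x,0) = 0 for all x ∈ ℝ, and for every y ∈ (0,1]: ∫_ℝ u(x,y)² e^{−γ|x|} dx ≤ C y ∫₀^y ∫_ℝ |Du(x,z)|² z^{β−1} e^{−γ|x| − μz} dx dz, where |Du|² = u_x² + u_y². -/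
open MeasureTheory Real Filter

noncomputable section

set_option maxHeartbeats 1000000 in
/-- estimate, near the degenerate boundary, for C¹ functions vanishing
on Γ₀, when 0 < β < 1; the constant C depends only on β and μ. -/
theorem stmt13 :
    ∀ β : ℝ, 0 < β → β < 1 → ∀ μ : ℝ, 0 < μ → ∃ C : ℝ, 0 < C ∧
      ∀ γ : ℝ, 0 < γ →
        ∀ u : ℝ × ℝ → ℝ, ContDiff ℝ 1 u → HasCompactSupport u →
          (∀ x : ℝ, u (x, 0) = 0) →
          ∀ y : ℝ, 0 < y → y ≤ 1 →
            (∫ x : ℝ, (u (x, y)) ^ 2 * Real.exp (-γ * |x|))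
              ≤ C * y * ∫ z in Set.Ioo (0 : ℝ) y, ∫ x : ℝ,
                  ((pdX u (x, z)) ^ 2 + (pdY u (x, z)) ^ 2) * z ^ (β - 1)
                    * Real.exp (-γ * |x| - μ * z) := by
  intro β hβ0 hβ1 μ hμ
  refine ⟨Real.exp μ, Real.exp_pos μ, ?_⟩
  intro γ hγ u hu hcs hb y hy0 hy1
  set E := Real.exp μ with hE
  -- basic continuity facts
  have hfd : Continuous (fderiv ℝ u) := hu.continuous_fderiv one_ne_zero
  have hpdX : Continuous (pdX u) :=
    (ContinuousLinearMap.apply ℝ ℝ ((1 : ℝ), (0 : ℝ))).continuous.comp hfd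
  have hpdY : Continuous (pdY u) :=
    (ContinuousLinearMap.apply ℝ ℝ ((0 : ℝ), (1 : ℝ))).continuous.comp hfd
  set φ : ℝ × ℝ → ℝ := fun p => (pdX u p) ^ 2 + (pdY u p) ^ 2 with hφ
  have hφc : Continuous φ := (hpdX.pow 2).add (hpdY.pow 2)
  have hφ0 : ∀ p, 0 ≤ φ p := fun p => by positivity
  -- compact support of φ
  have hKf : HasCompactSupport (fderiv ℝ u) := hcs.fderiv ℝ
  have hφsupp : ∀ p, p ∉ tsupport (fderiv ℝ u) → φ p = 0 := by
    intro p hp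
    have h0 : fderiv ℝ u p = 0 := image_eq_zero_of_notMem_tsupport hp
    simp [hφ, pdX, pdY, h0]
  have hφcs : HasCompactSupport φ := by
    apply HasCompactSupport.of_support_subset_isCompact hKf
    intro p hp
    by_contra hc
    exact hp (hφsupp p hc)
  -- global bound
  obtain ⟨M, hM⟩ := hφcs.exists_bound_of_continuous hφc
  have hMb : ∀ p, φ p ≤ M := fun p => (le_abs_self _).trans (by simpa using hM p)
  have hM0 : 0 ≤ M := le_trans (hφ0 (0, 0)) (hMb (0, 0))
  -- bound on the x-extent of the support
  obtain ⟨R, hR⟩ := (Metric.isBounded_iff_subset_closedBall (0 : ℝ × ℝ)).1 hKf.isBounded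
  have hφR : ∀ p : ℝ × ℝ, p.1 ∉ Set.Icc (-R) R → φ p = 0 := by
    intro p hp
    apply hφsupp
    intro hmem
    have := hR hmem
    rw [Metric.mem_closedBall, dist_zero_right] at this
    exact hp (abs_le.1 ((norm_fst_le p).trans this))
  -- the measure on the z-variable and the main integrand
  set ν : Measure ℝ := volume.restrict (Set.Ioo (0 : ℝ) y) with hν
  set F : ℝ × ℝ → ℝ := fun p =>
    φ p * p.2 ^ (β - 1) * Real.exp (-γ * |p.1| - μ * p.2) with hF
  -- integrability of the rpow weight on (0, y)
  have hβ1' : (-1 : ℝ) < β - 1 := by linarith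
  have hrpowI : IntegrableOn (fun z : ℝ => z ^ (β - 1)) (Set.Ioo 0 y) volume := by
    have := intervalIntegral.intervalIntegrable_rpow' (a := 0) (b := y) hβ1'
    exact (intervalIntegrable_iff_integrableOn_Ioo_of_le hy0.le).1 this
  -- a.e. membership of the second coordinate in Ioo 0 y under the product measure
  have hae : ∀ᵐ p ∂((volume : Measure ℝ).prod ν), p.2 ∈ Set.Ioo (0 : ℝ) y := by
    have h1 : (volume : Measure ℝ).prod ν
        = ((volume : Measure ℝ).prod (volume : Measure ℝ)).restrict
            (Set.univ ×ˢ Set.Ioo (0 : ℝ) y) := by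
      rw [← Measure.prod_restrict, Measure.restrict_univ]
    rw [h1]
    filter_upwards [ae_restrict_mem (MeasurableSet.univ.prod measurableSet_Ioo)] with p hp
    exact hp.2
  -- measurability of F
  have hFm : Measurable F := by
    have h1 : Measurable fun p : ℝ × ℝ => p.2 ^ (β - 1) := by fun_prop
    have h2 : Continuous fun p : ℝ × ℝ => Real.exp (-γ * |p.1| - μ * p.2) :=
      Real.continuous_exp.comp (((continuous_const.mul continuous_fst.abs)).sub
        (continuous_const.mul continuous_snd))
    exact (hφc.measurable.mul h1).mul h2.measurable
  -- integrability of F on the product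
  have hgI : Integrable (fun p : ℝ × ℝ =>
      (Set.indicator (Set.Icc (-R) R) (fun _ => M) p.1) * p.2 ^ (β - 1))
      ((volume : Measure ℝ).prod ν) := by
    have h1 : Integrable (fun x : ℝ => (Set.Icc (-R) R).indicator (fun _ => M) x)
        (volume : Measure ℝ) := by
      rw [integrable_indicator_iff measurableSet_Icc]
      exact integrableOn_const measure_Icc_lt_top.ne
    exact h1.mul_prod hrpowI
  have hFI : Integrable F ((volume : Measure ℝ).prod ν) := by
    apply hgI.mono' hFm.aestronglyMeasurable
    filter_upwards [hae] with p hp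
    have hz0 : 0 < p.2 := hp.1
    have hw0 : (0 : ℝ) ≤ p.2 ^ (β - 1) := Real.rpow_nonneg hz0.le _
    have he1 : Real.exp (-γ * |p.1| - μ * p.2) ≤ 1 := by
      rw [Real.exp_le_one_iff]
      nlinarith [abs_nonneg p.1]
    have hFnn : 0 ≤ F p := by
      apply mul_nonneg (mul_nonneg (hφ0 p) hw0) (Real.exp_pos _).le
    rw [Real.norm_eq_abs, abs_of_nonneg hFnn]
    by_cases hx : p.1 ∈ Set.Icc (-R) R
    · rw [Set.indicator_of_mem hx]
      calc F p ≤ φ p * p.2 ^ (β - 1) * 1 := by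
            apply mul_le_mul_of_nonneg_left he1 (mul_nonneg (hφ0 p) hw0)
        _ = φ p * p.2 ^ (β - 1) := by ring
        _ ≤ M * p.2 ^ (β - 1) := mul_le_mul_of_nonneg_right (hMb p) hw0
    · rw [Set.indicator_of_notMem hx]
      have : φ p = 0 := hφR p hx
      simp [hF, this]
  -- pointwise-in-x estimate
  have key : ∀ x : ℝ, u (x, y) ^ 2 * Real.exp (-γ * |x|)
      ≤ E * y * ∫ z, F (x, z) ∂ν := by
    intro x
    set h : ℝ → ℝ := fun z => pdY u (x, z) with hh
    have hhc : Continuous h := hpdY.comp (by continuity)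
    -- FTC representation
    have hrep : u (x, y) = ∫ z in (0 : ℝ)..y, h z := by
      have hderiv : ∀ t ∈ Set.uIcc (0 : ℝ) y,
          HasDerivAt (fun z => u (x, z)) (h t) t := by
        intro t _
        have h1 : HasDerivAt (fun z : ℝ => ((x, z) : ℝ × ℝ)) ((0 : ℝ), (1 : ℝ)) t :=
          (hasDerivAt_const t x).prodMk (hasDerivAt_id t)
        exact ((hu.differentiable one_ne_zero (x, t)).hasFDerivAt).comp_hasDerivAt t h1
      have := intervalIntegral.integral_eq_sub_of_hasDerivAt hderiv
        (hhc.intervalIntegrable 0 y)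
      rw [this, hb x, sub_zero]
    -- Cauchy–Schwarz
    set A : ℝ := ∫ z in (0 : ℝ)..y, |h z| with hA
    set B : ℝ := ∫ z in (0 : ℝ)..y, (h z) ^ 2 with hB
    have hA0 : 0 ≤ A :=
      intervalIntegral.integral_nonneg hy0.le (fun z _ => abs_nonneg _)
    have hB0 : 0 ≤ B :=
      intervalIntegral.integral_nonneg hy0.le (fun z _ => sq_nonneg _)
    have hintabs : IntervalIntegrable (fun z => |h z|) volume 0 y :=
      hhc.abs.intervalIntegrable 0 y
    have hintsq : IntervalIntegrable (fun z => (h z) ^ 2) volume 0 y :=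
      (hhc.pow 2).intervalIntegrable 0 y
    have hCS : A ^ 2 ≤ y * B := by
      have e1 : ∀ z : ℝ, (|h z| * y - A) ^ 2
          = y ^ 2 * (h z) ^ 2 - (2 * y * A) * |h z| + A ^ 2 := by
        intro z
        rw [← sq_abs (h z)]; ring
      have hnn : 0 ≤ ∫ z in (0 : ℝ)..y,
          (y ^ 2 * (h z) ^ 2 - (2 * y * A) * |h z| + A ^ 2) := by
        apply intervalIntegral.integral_nonneg hy0.le
        intro z _
        rw [← e1 z]; positivity
      have expand : (∫ z in (0 : ℝ)..y,
          (y ^ 2 * (h z) ^ 2 - (2 * y * A) * |h z| + A ^ 2))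
          = y ^ 2 * B - (2 * y * A) * A + A ^ 2 * y := by
        rw [intervalIntegral.integral_add (((hintsq.const_mul _).sub
          (hintabs.const_mul _))) intervalIntegrable_const,
          intervalIntegral.integral_sub (hintsq.const_mul _) (hintabs.const_mul _),
          intervalIntegral.integral_const_mul, intervalIntegral.integral_const_mul,
          intervalIntegral.integral_const]
        simp [hA, hB]; ring
      rw [expand] at hnn
      nlinarith
    have habs : |∫ z in (0 : ℝ)..y, h z| ≤ A :=
      intervalIntegral.abs_integral_le_integral_abs hy0.le
    have hsq : u (x, y) ^ 2 ≤ y * B := by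
      rw [hrep, ← sq_abs]
      calc |∫ z in (0 : ℝ)..y, h z| ^ 2 ≤ A ^ 2 := by
            apply pow_le_pow_left₀ (abs_nonneg _) habs
        _ ≤ y * B := hCS
    -- weighted comparison in z
    have hBIoo : B = ∫ z in Set.Ioo (0 : ℝ) y, (h z) ^ 2 := by
      rw [hB, intervalIntegral.integral_of_le hy0.le, integral_Ioc_eq_integral_Ioo]
    have hsqIoo : IntegrableOn (fun z => (h z) ^ 2) (Set.Ioo 0 y) volume :=
      (intervalIntegrable_iff_integrableOn_Ioo_of_le hy0.le).1 hintsq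
    -- integrability of the weighted integrand
    have hwm : AEStronglyMeasurable
        (fun z : ℝ => (h z) ^ 2 * z ^ (β - 1) * Real.exp (-μ * z)) ν := by
      apply Measurable.aestronglyMeasurable
      have h1 : Measurable fun z : ℝ => z ^ (β - 1) := by fun_prop
      exact ((hhc.pow 2).measurable.mul h1).mul (by continuity : Continuous fun z : ℝ =>
        Real.exp (-μ * z)).measurable
    have hzae : ∀ᵐ z ∂ν, z ∈ Set.Ioo (0 : ℝ) y := ae_restrict_mem measurableSet_Ioo
    have hwI : IntegrableOn
        (fun z : ℝ => (h z) ^ 2 * z ^ (β - 1) * Real.exp (-μ * z)) (Set.Ioo 0 y) volume := by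
      apply Integrable.mono' (hrpowI.const_mul M) hwm
      filter_upwards [hzae] with z hz
      have hw0 : (0 : ℝ) ≤ z ^ (β - 1) := Real.rpow_nonneg hz.1.le _
      have hh2 : (h z) ^ 2 ≤ M := le_trans (by simp [hφ, hh]; positivity) (hMb (x, z))
      have he1 : Real.exp (-μ * z) ≤ 1 := by
        rw [Real.exp_le_one_iff]; nlinarith [hz.1]
      rw [Real.norm_eq_abs, abs_of_nonneg (by positivity)]
      calc (h z) ^ 2 * z ^ (β - 1) * Real.exp (-μ * z)
          ≤ (h z) ^ 2 * z ^ (β - 1) * 1 :=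
            mul_le_mul_of_nonneg_left he1 (by positivity)
        _ = (h z) ^ 2 * z ^ (β - 1) := by ring
        _ ≤ M * z ^ (β - 1) := mul_le_mul_of_nonneg_right hh2 hw0
    -- B ≤ E * I
    set I : ℝ := ∫ z in Set.Ioo (0 : ℝ) y, (h z) ^ 2 * z ^ (β - 1) * Real.exp (-μ * z)
      with hI
    have hI0 : 0 ≤ I := by
      apply setIntegral_nonneg measurableSet_Ioo
      intro z hz
      have := Real.rpow_nonneg hz.1.le (β - 1)
      positivity
    have hBI : B ≤ E * I := by
      rw [hBIoo, hI, ← integral_const_mul]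
      apply setIntegral_mono_on hsqIoo (hwI.const_mul E) measurableSet_Ioo
      intro z hz
      have hz0 := hz.1
      have hzy := hz.2
      have hw1 : (1 : ℝ) ≤ z ^ (β - 1) := by
        calc (1 : ℝ) = (1 : ℝ) ^ (β - 1) := (Real.one_rpow _).symm
          _ ≤ y ^ (β - 1) := Real.rpow_le_rpow_of_nonpos hy0 hy1 (by linarith)
          _ ≤ z ^ (β - 1) := Real.rpow_le_rpow_of_nonpos hz0 hzy.le (by linarith)
      have hee : (1 : ℝ) ≤ Real.exp (-μ * z) * E := by
        rw [hE, ← Real.exp_add]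
        apply Real.one_le_exp
        nlinarith [hzy.trans_le hy1]
      have hq : (0 : ℝ) ≤ (h z) ^ 2 := sq_nonneg _
      have he0 : (0 : ℝ) ≤ Real.exp (-μ * z) := (Real.exp_pos _).le
      calc (h z) ^ 2 = (h z) ^ 2 * 1 * 1 := by ring
        _ ≤ (h z) ^ 2 * z ^ (β - 1) * (Real.exp (-μ * z) * E) := by
            apply mul_le_mul (mul_le_mul_of_nonneg_left hw1 hq) hee zero_le_one
            positivity
        _ = E * ((h z) ^ 2 * z ^ (β - 1) * Real.exp (-μ * z)) := by ring
    -- bring in the x-weight and compare with F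
    have hIF : I * Real.exp (-γ * |x|) ≤ ∫ z, F (x, z) ∂ν := by
      rw [hI, ← integral_mul_const]
      have hFxI : IntegrableOn (fun z => F (x, z)) (Set.Ioo 0 y) volume := by
        apply Integrable.mono' (hrpowI.const_mul M)
        · apply Measurable.aestronglyMeasurable
          exact hFm.comp (by fun_prop : Measurable fun z : ℝ => ((x, z) : ℝ × ℝ))
        · filter_upwards [hzae] with z hz
          have hw0 : (0 : ℝ) ≤ z ^ (β - 1) := Real.rpow_nonneg hz.1.le _
          have he1 : Real.exp (-γ * |x| - μ * z) ≤ 1 := by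
            rw [Real.exp_le_one_iff]; nlinarith [abs_nonneg x, hz.1]
          have hFnn : 0 ≤ F (x, z) :=
            mul_nonneg (mul_nonneg (hφ0 _) hw0) (Real.exp_pos _).le
          rw [Real.norm_eq_abs, abs_of_nonneg hFnn]
          calc F (x, z) ≤ φ (x, z) * z ^ (β - 1) * 1 :=
                mul_le_mul_of_nonneg_left he1 (mul_nonneg (hφ0 _) hw0)
            _ = φ (x, z) * z ^ (β - 1) := by ring
            _ ≤ M * z ^ (β - 1) := mul_le_mul_of_nonneg_right (hMb _) hw0
      apply setIntegral_mono_on _ hFxI measurableSet_Ioo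
      · intro z hz
        have hw0 : (0 : ℝ) ≤ z ^ (β - 1) := Real.rpow_nonneg hz.1.le _
        have : (h z) ^ 2 ≤ φ (x, z) := by simp [hφ, hh]; positivity
        calc (h z) ^ 2 * z ^ (β - 1) * Real.exp (-μ * z) * Real.exp (-γ * |x|)
            = (h z) ^ 2 * z ^ (β - 1) * Real.exp (-γ * |x| - μ * z) := by
              have hee : Real.exp (-μ * z) * Real.exp (-γ * |x|)
                  = Real.exp (-γ * |x| - μ * z) := by
                rw [← Real.exp_add]; ring_nf
              rw [mul_assoc, hee]
          _ ≤ φ (x, z) * z ^ (β - 1) * Real.exp (-γ * |x| - μ * z) := by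
              apply mul_le_mul_of_nonneg_right
                (mul_le_mul_of_nonneg_right this hw0) (Real.exp_pos _).le
      · exact hwI.mul_const _
    -- assemble
    have hexp0 : (0 : ℝ) ≤ Real.exp (-γ * |x|) := (Real.exp_pos _).le
    calc u (x, y) ^ 2 * Real.exp (-γ * |x|)
        ≤ (y * B) * Real.exp (-γ * |x|) := mul_le_mul_of_nonneg_right hsq hexp0
      _ ≤ (y * (E * I)) * Real.exp (-γ * |x|) := by
          apply mul_le_mul_of_nonneg_right (mul_le_mul_of_nonneg_left hBI hy0.le) hexp0
      _ = E * y * (I * Real.exp (-γ * |x|)) := by ring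
      _ ≤ E * y * ∫ z, F (x, z) ∂ν := by
          apply mul_le_mul_of_nonneg_left hIF
          positivity
  -- integrate in x and swap
  have hG : Integrable (fun x : ℝ => ∫ z, F (x, z) ∂ν) volume :=
    hFI.integral_prod_left
  have step1 : (∫ x : ℝ, u (x, y) ^ 2 * Real.exp (-γ * |x|))
      ≤ ∫ x : ℝ, E * y * ∫ z, F (x, z) ∂ν := by
    apply integral_mono_of_nonneg
    · filter_upwards with x; positivity
    · exact hG.const_mul _
    · filter_upwards with x; exact key x
  have step2 : (∫ x : ℝ, E * y * ∫ z, F (x, z) ∂ν)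
      = E * y * ∫ z, (∫ x : ℝ, F (x, z)) ∂ν := by
    rw [integral_const_mul]
    congr 1
    exact integral_integral_swap hFI
  calc (∫ x : ℝ, u (x, y) ^ 2 * Real.exp (-γ * |x|))
      ≤ ∫ x : ℝ, E * y * ∫ z, F (x, z) ∂ν := step1
    _ = E * y * ∫ z, (∫ x : ℝ, F (x, z)) ∂ν := step2
    _ = E * y * ∫ z in Set.Ioo (0 : ℝ) y, ∫ x : ℝ,
          ((pdX u (x, z)) ^ 2 + (pdY u (x, z)) ^ 2) * z ^ (β - 1)
            * Real.exp (-γ * |x| - μ * z) := rfl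
end
end
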